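/- arXiv:1409.6020 — 9 statements merged into one kernel-verified Lean document; each statement's English description precedes it below -/
import Mathlib

section
/- Let F be a finite field with q elements such that q is coprime to 3 and q is not congruent to 1 modulo 9. Then the number of pairs (x,y) ∈ F × F satisfying y³ = x⁴ − x equals q. -/
open Finset Polynomial

private lemma ncard_zero (F : Type*) [Field F] [Fintype F] [DecidableEq F] :
    (univ.filter fun y : F => y ^ 3 = (0 : F)).card = 1 := by
  have h : (univ.filter fun y : F => y ^ 3 = (0 : F)) = {0} := by
    ext y
    simp [pow_eq_zero_iff (by norm_num : (3 : ℕ) ≠ 0)]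
  rw [h, card_singleton]

private lemma ncard_of_ne_zero {F : Type*} [Field F] [Fintype F] [DecidableEq F]
    {ζ : F} (hζ : IsPrimitiveRoot ζ 3) {c : F} (hc : c ≠ 0) :
    (univ.filter fun y : F => y ^ 3 = c).card = if ∃ b : F, b ^ 3 = c then 3 else 0 := by
  have h : (univ.filter fun y : F => y ^ 3 = c) = (nthRoots 3 c).toFinset := by
    ext y
    simp [Polynomial.mem_nthRoots (by norm_num : 0 < 3)]
  rw [h, Multiset.toFinset_card_of_nodup (hζ.nthRoots_nodup hc), hζ.card_nthRoots c]
  by_cases h' : ∃ b : F, b ^ 3 = c <;> simp [h']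

private lemma cube_of_pow_m_eq_one {F : Type*} [Field F] [Fintype F] [DecidableEq F]
    {m : ℕ} (hm : 0 < m) (hq : Fintype.card F - 1 = 3 * m)
    {c : F} (h1 : c ^ m = 1) : ∃ b : F, b ^ 3 = c := by
  set S : Finset F := (univ.filter fun b : F => b ≠ 0).image (fun b => b ^ 3) with hS
  set K : Finset F := univ.filter fun x : F => x ^ m = 1 with hK
  have hSK : S ⊆ K := by
    intro a ha
    simp only [hS, mem_image, mem_filter, mem_univ, true_and] at ha
    obtain ⟨b, hb0, rfl⟩ := ha
    simp only [hK, mem_filter, mem_univ, true_and]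
    rw [← pow_mul, ← hq, FiniteField.pow_card_sub_one_eq_one b hb0]
  have hKcard : K.card ≤ m := by
    have hsub : K ⊆ (nthRoots m (1 : F)).toFinset := by
      intro x hx
      rw [Multiset.mem_toFinset, Polynomial.mem_nthRoots hm]
      simpa [hK] using hx
    calc K.card ≤ (nthRoots m (1 : F)).toFinset.card := Finset.card_le_card hsub
      _ ≤ Multiset.card (nthRoots m (1 : F)) := Multiset.toFinset_card_le _
      _ ≤ m := Polynomial.card_nthRoots m 1
  have hScard : m ≤ S.card := by
    have h3 : (univ.filter fun b : F => b ≠ 0).card ≤ 3 * S.card := by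
      apply Finset.card_le_mul_card_image
      intro a _
      have hsub : ((univ.filter fun b : F => b ≠ 0).filter fun b => b ^ 3 = a)
          ⊆ (nthRoots 3 a).toFinset := by
        intro x hx
        rw [Multiset.mem_toFinset, Polynomial.mem_nthRoots (by norm_num : 0 < 3)]
        exact (mem_filter.mp hx).2
      calc _ ≤ (nthRoots 3 a).toFinset.card := Finset.card_le_card hsub
        _ ≤ Multiset.card (nthRoots 3 a) := Multiset.toFinset_card_le _
        _ ≤ 3 := Polynomial.card_nthRoots 3 a
    have hcard : (univ.filter fun b : F => b ≠ 0).card = Fintype.card F - 1 := by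
      rw [Finset.filter_ne', Finset.card_erase_of_mem (mem_univ _), Finset.card_univ]
    omega
  have hcK : c ∈ K := by simp [hK, h1]
  have hcS : c ∈ S := by
    rwa [Finset.eq_of_subset_of_card_le hSK (le_trans hKcard hScard)]
  simp only [hS, mem_image, mem_filter, mem_univ, true_and] at hcS
  obtain ⟨b, _, hb⟩ := hcS
  exact ⟨b, hb⟩

private lemma triple_count {F : Type*} [Field F] [Fintype F] [DecidableEq F]
    {ζ : F} (hζ : IsPrimitiveRoot ζ 3) {m : ℕ} (hm : 0 < m)
    (hq : Fintype.card F - 1 = 3 * m) (hm3 : ¬ 3 ∣ m) (c : F) :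
    (univ.filter fun y : F => y ^ 3 = c).card
      + (univ.filter fun y : F => y ^ 3 = ζ * c).card
      + (univ.filter fun y : F => y ^ 3 = ζ ^ 2 * c).card = 3 := by
  rcases eq_or_ne c 0 with rfl | hc
  · simp only [mul_zero]
    rw [ncard_zero]
  have hζ0 : ζ ≠ 0 := hζ.ne_zero (by norm_num)
  have h1 : ζ * c ≠ 0 := mul_ne_zero hζ0 hc
  have h2 : ζ ^ 2 * c ≠ 0 := mul_ne_zero (pow_ne_zero 2 hζ0) hc
  rw [ncard_of_ne_zero hζ hc, ncard_of_ne_zero hζ h1, ncard_of_ne_zero hζ h2]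
  have hE : ∀ d : F, d ≠ 0 → ((∃ b : F, b ^ 3 = d) ↔ d ^ m = 1) := by
    intro d hd
    constructor
    · rintro ⟨b, rfl⟩
      have hb : b ≠ 0 := fun h => hd (by simp [h])
      rw [← pow_mul, ← hq, FiniteField.pow_card_sub_one_eq_one b hb]
    · exact cube_of_pow_m_eq_one hm hq
  have hcm3 : (c ^ m) ^ 3 = 1 := by
    rw [← pow_mul, mul_comm, ← hq, FiniteField.pow_card_sub_one_eq_one c hc]
  obtain ⟨i, hi3, hi⟩ := hζ.eq_pow_of_pow_eq_one hcm3
  have key : ∀ j : ℕ, ((ζ ^ j * c) ^ m = 1) ↔ (3 ∣ j * m + i) := by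
    intro j
    rw [mul_pow, ← pow_mul, ← hi, ← pow_add, hζ.pow_eq_one_iff_dvd]
  have e0 : (∃ b : F, b ^ 3 = c) ↔ 3 ∣ i := by
    rw [hE c hc]
    simpa using key 0
  have e1 : (∃ b : F, b ^ 3 = ζ * c) ↔ 3 ∣ m + i := by
    rw [hE _ h1]
    simpa using key 1
  have e2 : (∃ b : F, b ^ 3 = ζ ^ 2 * c) ↔ 3 ∣ 2 * m + i := by
    rw [hE _ h2]
    simpa using key 2
  have hdisj : (3 ∣ i ∧ ¬ 3 ∣ m + i ∧ ¬ 3 ∣ 2 * m + i)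
      ∨ (¬ 3 ∣ i ∧ 3 ∣ m + i ∧ ¬ 3 ∣ 2 * m + i)
      ∨ (¬ 3 ∣ i ∧ ¬ 3 ∣ m + i ∧ 3 ∣ 2 * m + i) := by
    rcases (show i = 0 ∨ i = 1 ∨ i = 2 by omega) with rfl | rfl | rfl <;>
      rcases (show m % 3 = 1 ∨ m % 3 = 2 by omega) with hm' | hm' <;>
        first
          | exact Or.inl ⟨by omega, by omega, by omega⟩
          | exact Or.inr (Or.inl ⟨by omega, by omega, by omega⟩)
          | exact Or.inr (Or.inr ⟨by omega, by omega, by omega⟩)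
  rcases hdisj with
    ⟨ha, hb, hc'⟩ | ⟨ha, hb, hc'⟩ | ⟨ha, hb, hc'⟩
  · rw [if_pos (e0.mpr ha), if_neg (fun h => hb (e1.mp h)), if_neg (fun h => hc' (e2.mp h))]
  · rw [if_neg (fun h => ha (e0.mp h)), if_pos (e1.mpr hb), if_neg (fun h => hc' (e2.mp h))]
  · rw [if_neg (fun h => ha (e0.mp h)), if_neg (fun h => hb (e1.mp h)), if_pos (e2.mpr hc')]

/-- Let `F` be a finite field with `q` elements such that `q` is coprime to `3` and
`q` is not congruent to `1` modulo `9`. Then the number of pairs `(x, y) ∈ F × F`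
satisfying `y³ = x⁴ − x` equals `q`. -/
theorem affine_point_count_of_not_one_mod_nine
    (F : Type*) [Field F] [Fintype F]
    (h3 : Nat.Coprime (Fintype.card F) 3)
    (h9 : Fintype.card F % 9 ≠ 1) :
    Nat.card {p : F × F // p.2 ^ 3 = p.1 ^ 4 - p.1} = Fintype.card F := by
  classical
  have hq1 : 1 < Fintype.card F := Fintype.one_lt_card
  have hcard : Nat.card {p : F × F // p.2 ^ 3 = p.1 ^ 4 - p.1}
      = ∑ x : F, (univ.filter fun y : F => y ^ 3 = x ^ 4 - x).card := by
    rw [Nat.card_eq_fintype_card,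
      Fintype.card_congr (Equiv.subtypeProdEquivSigmaSubtype fun x y : F => y ^ 3 = x ^ 4 - x),
      Fintype.card_sigma]
    exact Finset.sum_congr rfl fun x _ => Fintype.card_subtype _
  rw [hcard]
  have h30 : Fintype.card F % 3 ≠ 0 := by
    intro h
    have hd : (3 : ℕ) ∣ Fintype.card F := Nat.dvd_of_mod_eq_zero h
    have hcop := h3
    rw [Nat.coprime_comm, Nat.Prime.coprime_iff_not_dvd Nat.prime_three] at hcop
    exact hcop hd
  by_cases hmod : Fintype.card F % 3 = 1
  · -- q ≡ 1 mod 3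
    set m : ℕ := (Fintype.card F - 1) / 3 with hm_def
    have hq : Fintype.card F - 1 = 3 * m := by omega
    have hm : 0 < m := by omega
    have hm3 : ¬ 3 ∣ m := by
      intro hd
      obtain ⟨k, hk⟩ := hd
      omega
    -- obtain a primitive cube root of unity
    obtain ⟨g, hg⟩ := IsCyclic.exists_ofOrder_eq_natCard (α := Fˣ)
    have hgcard : orderOf g = 3 * m := by
      rw [hg, Nat.card_eq_fintype_card, Fintype.card_units]
      omega
    set u : Fˣ := g ^ m with hu_def
    have hu3 : orderOf u = 3 := by
      rw [hu_def, orderOf_pow, hgcard, Nat.gcd_eq_right ⟨3, by ring⟩, Nat.mul_div_cancel _ hm]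
    have hζord : orderOf ((u : F)) = 3 := by
      rw [orderOf_units, hu3]
    set ζ : F := (u : F) with hζ_def
    have hζ : IsPrimitiveRoot ζ 3 := hζord ▸ IsPrimitiveRoot.orderOf ζ
    have hζ0 : ζ ≠ 0 := hζ.ne_zero (by norm_num)
    have hζ3 : ζ ^ 3 = 1 := hζ.pow_eq_one
    have key := triple_count hζ hm hq hm3
    set n : F → ℕ := fun c => (univ.filter fun y : F => y ^ 3 = c).card with hn_def
    have hrw1 : ∀ x : F, (ζ * x) ^ 4 - ζ * x = ζ * (x ^ 4 - x) := by
      intro x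
      linear_combination (ζ * x ^ 4) * hζ3
    have hrw2 : ∀ x : F, (ζ ^ 2 * x) ^ 4 - ζ ^ 2 * x = ζ ^ 2 * (x ^ 4 - x) := by
      intro x
      linear_combination (x ^ 4 * ζ ^ 2 * (ζ ^ 3 + 1)) * hζ3
    have hsum1 : ∑ x : F, n (ζ * (x ^ 4 - x)) = ∑ x : F, n (x ^ 4 - x) := by
      calc ∑ x : F, n (ζ * (x ^ 4 - x)) = ∑ x : F, n ((ζ * x) ^ 4 - ζ * x) :=
            Finset.sum_congr rfl fun x _ => by rw [hrw1]
        _ = ∑ x : F, n (x ^ 4 - x) :=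
            Fintype.sum_bijective (fun x : F => ζ * x) (mulLeft_bijective₀ ζ hζ0)
              _ _ (fun x => rfl)
    have hsum2 : ∑ x : F, n (ζ ^ 2 * (x ^ 4 - x)) = ∑ x : F, n (x ^ 4 - x) := by
      calc ∑ x : F, n (ζ ^ 2 * (x ^ 4 - x)) = ∑ x : F, n ((ζ ^ 2 * x) ^ 4 - ζ ^ 2 * x) :=
            Finset.sum_congr rfl fun x _ => by rw [hrw2]
        _ = ∑ x : F, n (x ^ 4 - x) :=
            Fintype.sum_bijective (fun x : F => ζ ^ 2 * x)
              (mulLeft_bijective₀ _ (pow_ne_zero 2 hζ0)) _ _ (fun x => rfl)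
    have h3N : 3 * ∑ x : F, n (x ^ 4 - x) = 3 * Fintype.card F := by
      calc 3 * ∑ x : F, n (x ^ 4 - x)
          = ∑ x : F, n (x ^ 4 - x) + ∑ x : F, n (ζ * (x ^ 4 - x))
            + ∑ x : F, n (ζ ^ 2 * (x ^ 4 - x)) := by rw [hsum1, hsum2]; ring
        _ = ∑ x : F, (n (x ^ 4 - x) + n (ζ * (x ^ 4 - x)) + n (ζ ^ 2 * (x ^ 4 - x))) := by
            rw [Finset.sum_add_distrib, Finset.sum_add_distrib]
        _ = ∑ _x : F, 3 := Finset.sum_congr rfl fun x _ => key _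
        _ = 3 * Fintype.card F := by simp [mul_comm]
    simp only [hn_def] at h3N
    omega
  · -- q ≡ 2 mod 3 : cubing is a bijection
    have h3q : ¬ 3 ∣ (Fintype.card F - 1) := by omega
    have hinj : Function.Injective (fun y : F => y ^ 3) := by
      intro a b hab
      simp only at hab
      by_cases hb : b = 0
      · subst hb
        rw [zero_pow (by norm_num : (3 : ℕ) ≠ 0)] at hab
        exact pow_eq_zero_iff (by norm_num : (3 : ℕ) ≠ 0) |>.mp hab
      · have ha : a ≠ 0 := by
          intro h
          rw [h, zero_pow (by norm_num : (3 : ℕ) ≠ 0)] at hab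
          exact hb (pow_eq_zero_iff (by norm_num : (3 : ℕ) ≠ 0) |>.mp hab.symm)
        set w : Fˣ := Units.mk0 (a / b) (div_ne_zero ha hb) with hw_def
        have hw3 : w ^ 3 = 1 := by
          ext
          rw [Units.val_pow_eq_pow_val, Units.val_one, hw_def, Units.val_mk0, div_pow, hab,
            div_self (pow_ne_zero 3 hb)]
        have hd1 : orderOf w ∣ 3 := orderOf_dvd_of_pow_eq_one hw3
        have hd2 : orderOf w ∣ Fintype.card F - 1 := by
          rw [← Fintype.card_units]
          exact orderOf_dvd_card
        have hcop : Nat.Coprime 3 (Fintype.card F - 1) :=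
          (Nat.prime_three.coprime_iff_not_dvd).mpr h3q
        have hdvd1 : orderOf w ∣ 1 := hcop ▸ Nat.dvd_gcd hd1 hd2
        have hw1 : w = 1 := orderOf_eq_one_iff.mp (Nat.dvd_one.mp hdvd1)
        have : a / b = 1 := by
          have := congrArg (Units.val) hw1
          simpa [hw_def] using this
        field_simp at this
        exact this
    have hbij := Finite.injective_iff_bijective.mp hinj
    have hone : ∀ c : F, (univ.filter fun y : F => y ^ 3 = c).card = 1 := by
      intro c
      obtain ⟨y, hy⟩ := hbij.2 c
      have h : (univ.filter fun z : F => z ^ 3 = c) = {y} := by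
        ext z
        simp only [mem_filter, mem_univ, true_and, mem_singleton]
        constructor
        · intro h
          exact hinj (h.trans hy.symm)
        · rintro rfl
          exact hy
      rw [h, card_singleton]
    simp [hone]
end

section
/- Let F be a finite field with q elements where q ≡ 1 (mod 9), let K = ℚ(ζ) be the 9th cyclotomic field where ζ is a primitive 9th root of unity, and let χ : F → K be a multiplicative character of exact order 9 (extended by χ(0) = 0). Then Tr_{K/ℚ}( Σ_{x∈F} χ(x)⁶ · χ(1−x) ) = Tr_{K/ℚ}( Σ_{x∈F} χ(x)³ · χ(1−x) ). -/
/-- Let `F` be a finite field with `q ≡ 1 (mod 9)`, let `K = ℚ(ζ)` be the 9th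
cyclotomic field, and let `χ : F → K` be a multiplicative character of exact order 9
(with `χ 0 = 0`). Then `Tr_{K/ℚ}(J_{(6,1)}) = Tr_{K/ℚ}(J_{(3,1)})`. -/
theorem trace_jacobi_sum_six_one_eq_three_one
    (F : Type*) [Field F] [Fintype F]
    (h9 : Fintype.card F % 9 = 1)
    (χ : MulChar F (CyclotomicField 9 ℚ)) (hχ : orderOf χ = 9) :
    Algebra.trace ℚ (CyclotomicField 9 ℚ) (∑ x : F, χ x ^ 6 * χ (1 - x))
      = Algebra.trace ℚ (CyclotomicField 9 ℚ) (∑ x : F, χ x ^ 3 * χ (1 - x)) := by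
  set K := CyclotomicField 9 ℚ with hK
  have h0 : χ (0 : F) = 0 := χ.map_nonunit (by simp)
  have hpow9 : ∀ x : F, x ≠ 0 → χ x ^ 9 = 1 := by
    intro x hx
    have h1 : χ ^ 9 = 1 := by have := pow_orderOf_eq_one χ; rwa [hχ] at this
    have h2 : (χ ^ 9) x = χ x ^ 9 := χ.pow_apply' (by norm_num) x
    rw [h1] at h2
    rw [← h2, MulChar.one_apply (isUnit_iff_ne_zero.mpr hx)]
  have hmod : ∀ x : F, x ≠ 0 → ∀ a : ℕ, χ x ^ a = χ x ^ (a % 9) := by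
    intro x hx a
    conv_lhs => rw [← Nat.div_add_mod a 9]
    rw [pow_add, pow_mul, hpow9 x hx, one_pow, one_mul]
  have hneg : χ (-1 : F) = 1 := by
    have hne : (-1 : F) ≠ 0 := by
      simp
    have h2 : χ (-1 : F) ^ 2 = 1 := by
      rw [← map_pow]; norm_num
    have h9' : χ (-1 : F) ^ (2 * 4 + 1) = 1 := hpow9 (-1) hne
    rw [pow_add, pow_mul, h2, one_pow, one_mul, pow_one] at h9'
    exact h9'
  have hinv : ∀ x : F, x ≠ 0 → χ x⁻¹ = χ x ^ 8 := by
    intro x hx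
    have hne : χ x ≠ 0 := by
      intro h
      have := hpow9 x hx
      rw [h] at this; norm_num at this
    have h1 : χ x⁻¹ * χ x = 1 := by rw [← map_mul, inv_mul_cancel₀ hx, map_one]
    have h2 : χ x ^ 8 * χ x = 1 := by rw [← pow_succ]; exact hpow9 x hx
    exact mul_right_cancel₀ hne (h1.trans h2.symm)
  have h1sub : ∀ x : F, x ≠ 0 → χ (1 - x⁻¹) = χ (1 - x) * χ x ^ 8 := by
    intro x hx
    have h1 : (1 : F) - x⁻¹ = (-1) * (1 - x) * x⁻¹ := by field_simp; ring
    rw [h1, map_mul, map_mul, hneg, one_mul, hinv x hx]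
  -- the Galois automorphism sending 9th roots of unity to their 5th powers
  haveI : IsCyclotomicExtension {9} ℚ K := CyclotomicField.isCyclotomicExtension 9 ℚ
  have hirr : Irreducible (Polynomial.cyclotomic (↑(9 : ℕ+)) ℚ) :=
    Polynomial.cyclotomic.irreducible_rat (by norm_num)
  set σ : K ≃ₐ[ℚ] K :=
    (IsCyclotomicExtension.autEquivPow (n := 9) K hirr).symm (ZMod.unitOfCoprime 5 (by decide)) with hσdef
  have hσ : ∀ y : K, y ^ 9 = 1 → σ y = y ^ 5 := by
    intro y hy
    have hζ := IsCyclotomicExtension.zeta_spec 9 ℚ K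
    obtain ⟨i, _, rfl⟩ := hζ.eq_pow_of_pow_eq_one hy
    have h5 : σ (IsCyclotomicExtension.zeta 9 ℚ K) = (IsCyclotomicExtension.zeta 9 ℚ K) ^ 5 := by
      have hval := hζ.autToPow_spec ℚ σ
      have heq : (hζ.autToPow ℚ) σ = ZMod.unitOfCoprime 5 (by decide) := by
        have := (IsCyclotomicExtension.autEquivPow (n := 9) K hirr).apply_symm_apply
          (ZMod.unitOfCoprime 5 (by decide))
        rw [← hσdef] at this
        rw [← this]
        rfl
      rw [heq] at hval
      rw [← hval]
      congr 1
    rw [map_pow, h5, ← pow_mul, ← pow_mul, mul_comm]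
  have hσχ : ∀ x : F, σ (χ x) = χ x ^ 5 := by
    intro x
    by_cases hx : x = 0
    · simp [hx, h0]
    · exact hσ _ (hpow9 x hx)
  -- pointwise identities for the inversion substitution
  have step1 : ∀ x : F, χ x ^ 3 * χ (1 - x) ^ 5 = χ x⁻¹ * χ (1 - x⁻¹) ^ 5 := by
    intro x
    by_cases hx : x = 0
    · simp [hx, h0]
    · rw [hinv x hx, h1sub x hx, mul_pow, ← pow_mul]
      have h48 : χ x ^ 8 * χ x ^ (8 * 5) = χ x ^ 3 := by
        rw [← pow_add, hmod x hx 48]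
      rw [show χ x ^ 8 * (χ (1 - x) ^ 5 * χ x ^ (8 * 5))
            = χ x ^ 8 * χ x ^ (8 * 5) * χ (1 - x) ^ 5 by ring, h48]
  have step2 : ∀ x : F, χ x ^ 3 * χ (1 - x) = χ x⁻¹ ^ 5 * χ (1 - x⁻¹) := by
    intro x
    by_cases hx : x = 0
    · simp [hx, h0]
    · rw [hinv x hx, h1sub x hx, ← pow_mul]
      have h48 : χ x ^ (8 * 5) * χ x ^ 8 = χ x ^ 3 := by
        rw [← pow_add, hmod x hx 48]
      rw [show χ x ^ (8 * 5) * (χ (1 - x) * χ x ^ 8)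
            = χ x ^ (8 * 5) * χ x ^ 8 * χ (1 - x) by ring, h48]
  have einv : Equiv.Perm F := Function.Involutive.toPerm _ (inv_involutive)
  -- chain of sum identities
  have S1A : σ (∑ x : F, χ x ^ 6 * χ (1 - x)) = ∑ x : F, χ x ^ 3 * χ (1 - x) ^ 5 := by
    rw [map_sum]
    refine Finset.sum_congr rfl fun x _ => ?_
    rw [map_mul, map_pow, hσχ, hσχ, ← pow_mul]
    by_cases hx : x = 0
    · simp [hx, h0]
    · rw [hmod x hx (5 * 6)]
  have AB : (∑ x : F, χ x ^ 3 * χ (1 - x) ^ 5) = ∑ x : F, χ x * χ (1 - x) ^ 5 := by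
    calc (∑ x : F, χ x ^ 3 * χ (1 - x) ^ 5)
        = ∑ x : F, χ ((Function.Involutive.toPerm _ (inv_involutive : Function.Involutive (Inv.inv : F → F))) x)
            * χ (1 - (Function.Involutive.toPerm _ inv_involutive) x) ^ 5 :=
          Finset.sum_congr rfl fun x _ => step1 x
      _ = ∑ x : F, χ x * χ (1 - x) ^ 5 :=
          Equiv.sum_comp _ (fun x => χ x * χ (1 - x) ^ 5)
  have BC : (∑ x : F, χ x * χ (1 - x) ^ 5) = ∑ x : F, χ x ^ 5 * χ (1 - x) := by
    calc (∑ x : F, χ x * χ (1 - x) ^ 5)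
        = ∑ x : F, χ (Equiv.subLeft (1 : F) x) * χ (1 - Equiv.subLeft (1 : F) x) ^ 5 :=
          (Equiv.sum_comp (Equiv.subLeft (1 : F)) (fun x => χ x * χ (1 - x) ^ 5)).symm
      _ = ∑ x : F, χ x ^ 5 * χ (1 - x) := by
          refine Finset.sum_congr rfl fun x _ => ?_
          simp only [Equiv.subLeft_apply, sub_sub_cancel]
          ring
  have CS2 : (∑ x : F, χ x ^ 3 * χ (1 - x)) = ∑ x : F, χ x ^ 5 * χ (1 - x) := by
    calc (∑ x : F, χ x ^ 3 * χ (1 - x))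
        = ∑ x : F, χ ((Function.Involutive.toPerm _ (inv_involutive : Function.Involutive (Inv.inv : F → F))) x) ^ 5
            * χ (1 - (Function.Involutive.toPerm _ inv_involutive) x) :=
          Finset.sum_congr rfl fun x _ => step2 x
      _ = ∑ x : F, χ x ^ 5 * χ (1 - x) :=
          Equiv.sum_comp _ (fun x => χ x ^ 5 * χ (1 - x))
  calc Algebra.trace ℚ K (∑ x : F, χ x ^ 6 * χ (1 - x))
      = Algebra.trace ℚ K (σ (∑ x : F, χ x ^ 6 * χ (1 - x))) :=
        (Algebra.trace_eq_of_algEquiv σ _).symm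
    _ = Algebra.trace ℚ K (∑ x : F, χ x ^ 3 * χ (1 - x)) := by
        rw [S1A, AB, BC, ← CS2]
end

section
/- Let γ be the 6×6 complex matrix with entries γ₁₃ = γ₂₄ = γ₃₅ = γ₄₆ = γ₆₁ = 1, γ₅₂ = −1, and all other entries 0. For all complex numbers u₁, u₂, u₃ of absolute value 1, the characteristic polynomial of D(u₁,u₂,u₃)·γ equals X⁶ + 1, and likewise the characteristic polynomial of D(u₁,u₂,u₃)·γ⁵ equals X⁶ + 1, where D(u₁,u₂,u₃) = diag(u₁, ū₁, u₂, ū₂, u₃, ū₃). -/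
open Matrix Polynomial

@[simp] private lemma fin_cs_1_0 : Fin.castSucc (0 : Fin 1) = 0 := rfl
@[simp] private lemma fin_s_1_0 : Fin.succ (0 : Fin 1) = 1 := rfl
@[simp] private lemma fin_cs_2_0 : Fin.castSucc (0 : Fin 2) = 0 := rfl
@[simp] private lemma fin_s_2_0 : Fin.succ (0 : Fin 2) = 1 := rfl
@[simp] private lemma fin_cs_2_1 : Fin.castSucc (1 : Fin 2) = 1 := rfl
@[simp] private lemma fin_s_2_1 : Fin.succ (1 : Fin 2) = 2 := rfl
@[simp] private lemma fin_cs_3_0 : Fin.castSucc (0 : Fin 3) = 0 := rfl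
@[simp] private lemma fin_s_3_0 : Fin.succ (0 : Fin 3) = 1 := rfl
@[simp] private lemma fin_cs_3_1 : Fin.castSucc (1 : Fin 3) = 1 := rfl
@[simp] private lemma fin_s_3_1 : Fin.succ (1 : Fin 3) = 2 := rfl
@[simp] private lemma fin_cs_3_2 : Fin.castSucc (2 : Fin 3) = 2 := rfl
@[simp] private lemma fin_s_3_2 : Fin.succ (2 : Fin 3) = 3 := rfl
@[simp] private lemma fin_cs_4_0 : Fin.castSucc (0 : Fin 4) = 0 := rfl
@[simp] private lemma fin_s_4_0 : Fin.succ (0 : Fin 4) = 1 := rfl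
@[simp] private lemma fin_cs_4_1 : Fin.castSucc (1 : Fin 4) = 1 := rfl
@[simp] private lemma fin_s_4_1 : Fin.succ (1 : Fin 4) = 2 := rfl
@[simp] private lemma fin_cs_4_2 : Fin.castSucc (2 : Fin 4) = 2 := rfl
@[simp] private lemma fin_s_4_2 : Fin.succ (2 : Fin 4) = 3 := rfl
@[simp] private lemma fin_cs_4_3 : Fin.castSucc (3 : Fin 4) = 3 := rfl
@[simp] private lemma fin_s_4_3 : Fin.succ (3 : Fin 4) = 4 := rfl
@[simp] private lemma fin_cs_5_0 : Fin.castSucc (0 : Fin 5) = 0 := rfl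
@[simp] private lemma fin_s_5_0 : Fin.succ (0 : Fin 5) = 1 := rfl
@[simp] private lemma fin_cs_5_1 : Fin.castSucc (1 : Fin 5) = 1 := rfl
@[simp] private lemma fin_s_5_1 : Fin.succ (1 : Fin 5) = 2 := rfl
@[simp] private lemma fin_cs_5_2 : Fin.castSucc (2 : Fin 5) = 2 := rfl
@[simp] private lemma fin_s_5_2 : Fin.succ (2 : Fin 5) = 3 := rfl
@[simp] private lemma fin_cs_5_3 : Fin.castSucc (3 : Fin 5) = 3 := rfl
@[simp] private lemma fin_s_5_3 : Fin.succ (3 : Fin 5) = 4 := rfl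
@[simp] private lemma fin_cs_5_4 : Fin.castSucc (4 : Fin 5) = 4 := rfl
@[simp] private lemma fin_s_5_4 : Fin.succ (4 : Fin 5) = 5 := rfl

private lemma cons_val_five'' {α : Type*} {m : ℕ} (x : α) (u : Fin (m+5) → α) :
    Matrix.vecCons x u 5 = Matrix.vecHead (Matrix.vecTail (Matrix.vecTail (Matrix.vecTail (Matrix.vecTail u)))) :=
  rfl

set_option maxRecDepth 10000 in
set_option maxHeartbeats 2000000 in
private theorem aux_cp1 (a b c d e f : ℂ) (h : a*b*c*d*e*f = -1) :
    (!![0,0,a,0,0,0;0,0,0,b,0,0;0,0,0,0,c,0;0,0,0,0,0,d;0,e,0,0,0,0;f,0,0,0,0,0] : Matrix (Fin 6) (Fin 6) ℂ).charpoly = X^6+1 := by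
  rw [Matrix.charpoly]
  have : charmatrix (!![0,0,a,0,0,0;0,0,0,b,0,0;0,0,0,0,c,0;0,0,0,0,0,d;0,e,0,0,0,0;f,0,0,0,0,0] : Matrix (Fin 6) (Fin 6) ℂ)
    = !![X,0,-C a,0,0,0;0,X,0,-C b,0,0;0,0,X,0,-C c,0;0,0,0,X,0,-C d;0,-C e,0,0,X,0;-C f,0,0,0,0,X] := by
    ext i j : 2
    fin_cases i <;> fin_cases j <;>
      simp [charmatrix_apply_eq, charmatrix_apply_ne, cons_val_five'', Matrix.vecHead, Matrix.vecTail]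
  rw [this]
  simp (config := { decide := true }) [Matrix.det_succ_row_zero, Fin.sum_univ_succ, Fin.succAbove, cons_val_five'', Matrix.vecHead, Matrix.vecTail]
  ring_nf
  rw [show (C a * C b * C c * C d * C e * C f : ℂ[X]) = C (a*b*c*d*e*f) by simp [_root_.map_mul], h]
  simp
  ring

set_option maxRecDepth 10000 in
set_option maxHeartbeats 2000000 in
private theorem aux_cp5 (a b c d e f : ℂ) (h : a*b*c*d*e*f = -1) :
    (!![0,0,0,0,0,a;0,0,0,0,b,0;c,0,0,0,0,0;0,d,0,0,0,0;0,0,e,0,0,0;0,0,0,f,0,0] : Matrix (Fin 6) (Fin 6) ℂ).charpoly = X^6+1 := by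
  rw [Matrix.charpoly]
  have : charmatrix (!![0,0,0,0,0,a;0,0,0,0,b,0;c,0,0,0,0,0;0,d,0,0,0,0;0,0,e,0,0,0;0,0,0,f,0,0] : Matrix (Fin 6) (Fin 6) ℂ)
    = !![X,0,0,0,0,-C a;0,X,0,0,-C b,0;-C c,0,X,0,0,0;0,-C d,0,X,0,0;0,0,-C e,0,X,0;0,0,0,-C f,0,X] := by
    ext i j : 2
    fin_cases i <;> fin_cases j <;>
      simp [charmatrix_apply_eq, charmatrix_apply_ne, cons_val_five'', Matrix.vecHead, Matrix.vecTail]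
  rw [this]
  simp (config := { decide := true }) [Matrix.det_succ_row_zero, Fin.sum_univ_succ, Fin.succAbove, cons_val_five'', Matrix.vecHead, Matrix.vecTail]
  ring_nf
  rw [show (C a * C b * C c * C d * C e * C f : ℂ[X]) = C (a*b*c*d*e*f) by simp [_root_.map_mul], h]
  simp
  ring

set_option maxRecDepth 10000 in
set_option maxHeartbeats 2000000 in
/-- For `u₁, u₂, u₃` on the unit circle, the characteristic polynomials of
`D(u₁,u₂,u₃)·γ` and `D(u₁,u₂,u₃)·γ⁵` are both `X⁶ + 1`. -/
theorem charpoly_component_one_and_five (u₁ u₂ u₃ : ℂ)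
    (h₁ : ‖u₁‖ = 1) (h₂ : ‖u₂‖ = 1) (h₃ : ‖u₃‖ = 1) :
    let γ : Matrix (Fin 6) (Fin 6) ℂ :=
      !![0, 0, 1, 0, 0, 0;
         0, 0, 0, 1, 0, 0;
         0, 0, 0, 0, 1, 0;
         0, 0, 0, 0, 0, 1;
         0, -1, 0, 0, 0, 0;
         1, 0, 0, 0, 0, 0]
    let D : Matrix (Fin 6) (Fin 6) ℂ :=
      Matrix.diagonal ![u₁, starRingEnd ℂ u₁, u₂, starRingEnd ℂ u₂, u₃, starRingEnd ℂ u₃]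
    (D * γ).charpoly = X ^ 6 + 1 ∧ (D * γ ^ 5).charpoly = X ^ 6 + 1 := by
  intro γ D
  have e1 : u₁ * starRingEnd ℂ u₁ = 1 := by
    rw [Complex.mul_conj, Complex.normSq_eq_norm_sq, h₁]; norm_num
  have e2 : u₂ * starRingEnd ℂ u₂ = 1 := by
    rw [Complex.mul_conj, Complex.normSq_eq_norm_sq, h₂]; norm_num
  have e3 : u₃ * starRingEnd ℂ u₃ = 1 := by
    rw [Complex.mul_conj, Complex.normSq_eq_norm_sq, h₃]; norm_num
  have h2 : γ * γ = !![0,0,0,0,1,0; 0,0,0,0,0,1; 0,-1,0,0,0,0; 1,0,0,0,0,0; 0,0,0,-1,0,0; 0,0,1,0,0,0] := by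
    ext i j
    fin_cases i <;> fin_cases j <;>
      simp [γ, Matrix.mul_apply, Fin.sum_univ_six, cons_val_five'', Matrix.vecHead, Matrix.vecTail]
  have h4 : (γ * γ) * (γ * γ) =
      !![0,0,0,-1,0,0; 0,0,1,0,0,0; 0,0,0,0,0,-1; 0,0,0,0,1,0; -1,0,0,0,0,0; 0,-1,0,0,0,0] := by
    rw [h2]
    ext i j
    fin_cases i <;> fin_cases j <;>
      simp [Matrix.mul_apply, Fin.sum_univ_six, cons_val_five'', Matrix.vecHead, Matrix.vecTail]
  have hg5 : γ ^ 5 =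
      !![0,0,0,0,0,-1; 0,0,0,0,1,0; -1,0,0,0,0,0; 0,-1,0,0,0,0; 0,0,-1,0,0,0; 0,0,0,-1,0,0] := by
    have hpow : γ ^ 5 = ((γ * γ) * (γ * γ)) * γ := by
      rw [show (5:ℕ) = 2*2+1 from rfl, pow_succ, pow_mul, pow_two, pow_two]
    rw [hpow, h4]
    ext i j
    fin_cases i <;> fin_cases j <;>
      simp [γ, Matrix.mul_apply, Fin.sum_univ_six, cons_val_five'', Matrix.vecHead, Matrix.vecTail]
  have hD1 : D * γ =
      !![0,0,u₁,0,0,0; 0,0,0,starRingEnd ℂ u₁,0,0; 0,0,0,0,u₂,0; 0,0,0,0,0,starRingEnd ℂ u₂;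
         0,-u₃,0,0,0,0; starRingEnd ℂ u₃,0,0,0,0,0] := by
    ext i j
    fin_cases i <;> fin_cases j <;>
      simp [γ, D, Matrix.mul_apply, Matrix.diagonal, Fin.sum_univ_six, cons_val_five'', Matrix.vecHead, Matrix.vecTail]
  have hD5 : D * γ ^ 5 =
      !![0,0,0,0,0,-u₁; 0,0,0,0,starRingEnd ℂ u₁,0; -u₂,0,0,0,0,0; 0,-(starRingEnd ℂ u₂),0,0,0,0;
         0,0,-u₃,0,0,0; 0,0,0,-(starRingEnd ℂ u₃),0,0] := by
    rw [hg5]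
    ext i j
    fin_cases i <;> fin_cases j <;>
      simp [D, Matrix.mul_apply, Matrix.diagonal, Fin.sum_univ_six, cons_val_five'', Matrix.vecHead, Matrix.vecTail]
  constructor
  · rw [hD1]
    exact aux_cp1 _ _ _ _ _ _ (by
      rw [show u₁ * starRingEnd ℂ u₁ * u₂ * starRingEnd ℂ u₂ * -u₃ * starRingEnd ℂ u₃
          = -((u₁ * starRingEnd ℂ u₁) * ((u₂ * starRingEnd ℂ u₂) * (u₃ * starRingEnd ℂ u₃))) by ring,
        e1, e2, e3]
      norm_num)
  · rw [hD5]
    exact aux_cp5 _ _ _ _ _ _ (by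
      rw [show -u₁ * starRingEnd ℂ u₁ * -u₂ * -(starRingEnd ℂ u₂) * -u₃ * -(starRingEnd ℂ u₃)
          = -((u₁ * starRingEnd ℂ u₁) * ((u₂ * starRingEnd ℂ u₂) * (u₃ * starRingEnd ℂ u₃))) by ring,
        e1, e2, e3]
      norm_num)
end

section
/- Let γ be the 6×6 complex matrix with entries γ₁₃ = γ₂₄ = γ₃₅ = γ₄₆ = γ₆₁ = 1, γ₅₂ = −1, and all other entries 0. For all complex numbers u₁, u₂, u₃ of absolute value 1, the characteristic polynomial of D(u₁,u₂,u₃)·γ² equals X⁶ + (u₁ū₂u₃ + ū₁u₂ū₃)X³ + 1, where D(u₁,u₂,u₃) = diag(u₁, ū₁, u₂, ū₂, u₃, ū₃). -/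
open Matrix Polynomial

private lemma cval5 {α : Type*} {m : ℕ} (x : α) (u : Fin (m+5) → α) :
    vecCons x u 5 = vecHead (vecTail (vecTail (vecTail (vecTail u)))) := rfl

set_option maxHeartbeats 1000000 in
private lemma detAux (a b c d e f : ℂ) (h : a * d * e * (b * c * f) = 1) :
    (!![0, 0, 0, 0, a, 0;
        0, 0, 0, 0, 0, b;
        0, -c, 0, 0, 0, 0;
        d, 0, 0, 0, 0, 0;
        0, 0, 0, -e, 0, 0;
        0, 0, f, 0, 0, 0] : Matrix (Fin 6) (Fin 6) ℂ).charpoly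
      = X ^ 6 + C (a * d * e + b * c * f) * X ^ 3 + 1 := by
  set M : Matrix (Fin 6) (Fin 6) ℂ := !![0, 0, 0, 0, a, 0;
        0, 0, 0, 0, 0, b;
        0, -c, 0, 0, 0, 0;
        d, 0, 0, 0, 0, 0;
        0, 0, 0, -e, 0, 0;
        0, 0, f, 0, 0, 0] with hMdef
  let e6 : Fin 6 ≃ Fin 6 :=
    ⟨![0,4,3,1,5,2], ![0,3,5,2,1,4], by decide, by decide⟩
  let eq : (Fin 3 ⊕ Fin 3) ≃ Fin 6 := finSumFinEquiv.trans e6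
  have hdet : (charmatrix M).det = ((charmatrix M).submatrix eq eq).det :=
    (Matrix.det_submatrix_equiv_self eq _).symm
  have hblocks : (charmatrix M).submatrix eq eq =
      Matrix.fromBlocks
        !![X, -C a, 0; 0, X, C e; -C d, 0, X]
        0 0
        !![X, -C b, 0; 0, X, -C f; C c, 0, X] := by
    ext i j : 2
    rcases i with i | i <;> rcases j with j | j <;> fin_cases i <;> fin_cases j <;>
      simp [eq, e6, charmatrix, hMdef, Matrix.fromBlocks, finSumFinEquiv, Fin.castAdd,
        Fin.natAdd, Fin.castLE, cval5, Matrix.vecHead, Matrix.vecTail]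
  rw [Matrix.charpoly, hdet, hblocks, Matrix.det_fromBlocks_zero₂₁]
  simp [Matrix.det_fin_three]
  have hC : (C a * C d * C e) * (C b * C c * C f) = (1 : ℂ[X]) := by
    rw [← C_mul, ← C_mul, ← C_mul, ← C_mul, ← C_mul, h, C_1]
  linear_combination hC

set_option maxHeartbeats 1000000 in
/-- For `u₁, u₂, u₃` on the unit circle, the characteristic polynomial of
`D(u₁,u₂,u₃)·γ²` is `X⁶ + (u₁ū₂u₃ + ū₁u₂ū₃)X³ + 1`. -/
theorem charpoly_component_two (u₁ u₂ u₃ : ℂ)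
    (h₁ : ‖u₁‖ = 1) (h₂ : ‖u₂‖ = 1) (h₃ : ‖u₃‖ = 1) :
    let γ : Matrix (Fin 6) (Fin 6) ℂ :=
      !![0, 0, 1, 0, 0, 0;
         0, 0, 0, 1, 0, 0;
         0, 0, 0, 0, 1, 0;
         0, 0, 0, 0, 0, 1;
         0, -1, 0, 0, 0, 0;
         1, 0, 0, 0, 0, 0]
    let D : Matrix (Fin 6) (Fin 6) ℂ :=
      Matrix.diagonal ![u₁, starRingEnd ℂ u₁, u₂, starRingEnd ℂ u₂, u₃, starRingEnd ℂ u₃]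
    (D * γ ^ 2).charpoly
      = X ^ 6
        + C (u₁ * starRingEnd ℂ u₂ * u₃ + starRingEnd ℂ u₁ * u₂ * starRingEnd ℂ u₃) * X ^ 3
        + 1 := by
  intro γ D
  have e₁ : starRingEnd ℂ u₁ = u₁⁻¹ := (Complex.inv_eq_conj h₁).symm
  have e₂ : starRingEnd ℂ u₂ = u₂⁻¹ := (Complex.inv_eq_conj h₂).symm
  have e₃ : starRingEnd ℂ u₃ = u₃⁻¹ := (Complex.inv_eq_conj h₃).symm
  have n₁ : u₁ ≠ 0 := by intro h; rw [h] at h₁; simp at h₁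
  have n₂ : u₂ ≠ 0 := by intro h; rw [h] at h₂; simp at h₂
  have n₃ : u₃ ≠ 0 := by intro h; rw [h] at h₃; simp at h₃
  have hγ2 : γ ^ 2 =
      !![0, 0, 0, 0, 1, 0;
         0, 0, 0, 0, 0, 1;
         0, -1, 0, 0, 0, 0;
         1, 0, 0, 0, 0, 0;
         0, 0, 0, -1, 0, 0;
         0, 0, 1, 0, 0, 0] := by
    rw [pow_two]
    ext i j
    fin_cases i <;> fin_cases j <;>
      simp [γ, Matrix.mul_apply, Fin.sum_univ_six, cval5, Matrix.vecHead, Matrix.vecTail]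
  have hM : D * γ ^ 2 =
      !![0, 0, 0, 0, u₁, 0;
         0, 0, 0, 0, 0, u₁⁻¹;
         0, -u₂, 0, 0, 0, 0;
         u₂⁻¹, 0, 0, 0, 0, 0;
         0, 0, 0, -u₃, 0, 0;
         0, 0, u₃⁻¹, 0, 0, 0] := by
    rw [hγ2]
    ext i j
    fin_cases i <;> fin_cases j <;>
      simp [D, e₁, e₂, e₃, Matrix.mul_apply, Fin.sum_univ_six, cval5, Matrix.vecHead,
        Matrix.vecTail, Matrix.diagonal]
  rw [hM, detAux u₁ u₁⁻¹ u₂ u₂⁻¹ u₃ u₃⁻¹ (by field_simp), e₁, e₂, e₃]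
end

section
/- Let M be the square matrix over ℚ whose rows and columns are indexed by the unit group (ℤ/9ℤ)* (a set of 6 elements), with entry M(a,c) = 1 if a·c⁻¹ ∈ {2, 4, 8} and M(a,c) = 0 otherwise. Then the rank of M equals 4. -/
open Matrix

private def uu : Fin 6 → (ZMod 9)ˣ := fun k => (ZMod.unitOfCoprime 2 (by norm_num)) ^ (k : ℕ)

private noncomputable def ee : Fin 6 ≃ (ZMod 9)ˣ :=
  Equiv.ofBijective uu ((Fintype.bijective_iff_injective_and_card uu).2 ⟨by decide, by decide⟩)

private lemma ee_apply (i : Fin 6) : ee i = uu i := rfl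

private lemma uu_mul_neg : ∀ j : Fin 6, uu j * uu (-j) = 1 := by decide

private lemma uu_inv (j : Fin 6) : (uu j)⁻¹ = uu (-j) :=
  inv_eq_of_mul_eq_one_left (by rw [mul_comm]; exact uu_mul_neg j)

private def NN : Matrix (Fin 6) (Fin 6) ℚ :=
  fun i j => if j = i + 3 ∨ j = i + 4 ∨ j = i + 5 then 1 else 0

private def KK : Matrix (Fin 6) (Fin 2) ℚ :=
  fun i j =>
    if j = 0 then (if i = 0 ∨ i = 3 then 1 else if i = 1 ∨ i = 4 then -1 else 0)
    else (if i = 1 ∨ i = 4 then 1 else if i = 2 ∨ i = 5 then -1 else 0)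

private def LL : Matrix (Fin 2) (Fin 6) ℚ := fun i j => if (j : ℕ) = (i : ℕ) then 1 else 0

private def PP : Matrix (Fin 4) (Fin 6) ℚ := fun i j => if (j : ℕ) = (i : ℕ) then 1 else 0

private def QQ : Matrix (Fin 6) (Fin 4) ℚ := fun i j => if (i : ℕ) = (j : ℕ) + 1 then 1 else 0

private def A4 : Matrix (Fin 4) (Fin 4) ℚ :=
  fun i j =>
    if ((i : ℕ) = 0 ∧ ((j : ℕ) = 2 ∨ (j : ℕ) = 3)) ∨ ((i : ℕ) = 1 ∧ (j : ℕ) = 3) ∨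
        ((i : ℕ) = 2 ∧ (j : ℕ) = 0) ∨ ((i : ℕ) = 3 ∧ ((j : ℕ) = 0 ∨ (j : ℕ) = 1)) then 1 else 0

private def T2 : Matrix (Fin 2) (Fin 2) ℚ :=
  fun i j => if i = 0 then (if j = 0 then 1 else 0) else (if j = 0 then -1 else 1)

private lemma NN_rank_le : NN.rank ≤ 4 := by
  have hNK : NN * KK = 0 := by
    ext i j
    fin_cases i <;> fin_cases j <;>
      simp (config := { decide := true }) [NN, KK, Matrix.mul_apply, Fin.sum_univ_six]
  have h1 : NN.rank + KK.rank ≤ 6 := by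
    simpa using Matrix.rank_add_rank_le_card_of_mul_eq_zero hNK
  have hLK : LL * KK = T2 := by
    ext i j
    fin_cases i <;> fin_cases j <;>
      simp (config := { decide := true }) [LL, KK, T2, Matrix.mul_apply, Fin.sum_univ_six]
  have h2 : (2 : ℕ) ≤ KK.rank := by
    have hu : IsUnit (LL * KK) := by
      rw [Matrix.isUnit_iff_isUnit_det, hLK]
      have : T2.det = 1 := by
        simp (config := { decide := true }) [T2, Matrix.det_fin_two]
      rw [this]; exact isUnit_one
    have := Matrix.rank_mul_le_right LL KK
    rw [Matrix.rank_of_isUnit _ hu] at this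
    simpa using this
  omega

private lemma NN_rank_ge : 4 ≤ NN.rank := by
  have hPNQ : PP * NN * QQ = A4 := by
    ext i j
    fin_cases i <;> fin_cases j <;>
      simp (config := { decide := true }) [PP, NN, QQ, A4, Matrix.mul_apply,
        Fin.sum_univ_six, Fin.sum_univ_four]
  have hu : IsUnit (PP * (NN * QQ)) := by
    rw [← Matrix.mul_assoc, Matrix.isUnit_iff_isUnit_det, hPNQ]
    have : A4.det = 1 := by
      simp (config := { decide := true }) [A4, Matrix.det_succ_row_zero, Fin.sum_univ_succ]
    rw [this]; exact isUnit_one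
  have h3 := Matrix.rank_mul_le_right PP (NN * QQ)
  have h4 := Matrix.rank_mul_le_left NN QQ
  rw [Matrix.rank_of_isUnit _ hu] at h3
  simp only [Fintype.card_fin] at h3
  omega

/-- The matrix over `ℚ` indexed by `(ℤ/9ℤ)*` with entry `1` at `(a, c)` when
`a·c⁻¹ ∈ {2, 4, 8}` and `0` otherwise has rank `4`. -/
theorem cm_type_matrix_rank :
    let M : Matrix (ZMod 9)ˣ (ZMod 9)ˣ ℚ :=
      Matrix.of fun a c =>
        if ((a * c⁻¹ : (ZMod 9)ˣ) : ZMod 9) ∈ ({2, 4, 8} : Set (ZMod 9)) then 1 else 0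
    M.rank = 4 := by
  intro M
  have hsub : M.submatrix ee ee = NN := by
    ext i j
    rw [Matrix.submatrix_apply, ee_apply, ee_apply]
    show (if ((uu i * (uu j)⁻¹ : (ZMod 9)ˣ) : ZMod 9) ∈ ({2, 4, 8} : Set (ZMod 9)) then (1:ℚ) else 0)
        = NN i j
    rw [uu_inv]
    simp only [Set.mem_insert_iff, Set.mem_singleton_iff, NN]
    fin_cases i <;> fin_cases j <;>
      first
        | rw [if_pos (by decide), if_pos (by decide)]
        | rw [if_neg (by decide), if_neg (by decide)]
  have h := Matrix.rank_submatrix M ee ee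
  rw [hsub] at h
  rw [← h]
  exact le_antisymm NN_rank_le NN_rank_ge
end

section
/- Let K = ℚ(ζ) be the 9th cyclotomic field where ζ is a primitive 9th root of unity, let 𝒪 be its ring of integers, and let 𝔪 be the ideal of 𝒪 generated by (1 + ζ + ζ⁴)⁴. Set ε₀ = −ζ², ε₁ = ζ⁴ − ζ³ + ζ, ε₂ = ζ⁵ + ζ² − ζ. Then for integers a, b, c, one has ε₀^a ε₁^b ε₂^c ≡ 1 (mod 𝔪) if and only if there exists an integer k such that a ≡ 2k (mod 18), b ≡ k (mod 9), and c ≡ 2k (mod 3). -/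
set_option maxRecDepth 100000
set_option maxHeartbeats 1000000
set_option synthInstance.maxHeartbeats 400000

open NumberField Polynomial

namespace Cyclo9Aux

def Nmat : Matrix (Fin 4) (Fin 4) (ZMod 3) := !![0,1,0,0; 0,0,1,0; 0,0,0,1; 0,0,0,0]
def Mmat : Matrix (Fin 4) (Fin 4) (ZMod 3) := 1 + Nmat
def Amat : Matrix (Fin 4) (Fin 4) (ZMod 3) := -(Mmat^2)
def Bmat : Matrix (Fin 4) (Fin 4) (ZMod 3) := Mmat^4 - Mmat^3 + Mmat
def Cmat : Matrix (Fin 4) (Fin 4) (ZMod 3) := Mmat^5 + Mmat^2 - Mmat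

theorem key : ∀ i : ℕ, i < 18 → ∀ j : ℕ, j < 3 → Amat^i * Cmat^j = 1 → i = 0 ∧ j = 0 := by
  decide

theorem zpow_emod_eq {G : Type*} [Group G] (g : G) {n : ℕ} (hn : 0 < n) (h : g ^ n = 1)
    (a : ℤ) : g ^ a = g ^ (a % (n : ℤ)).toNat := by
  conv_lhs => rw [← Int.mul_ediv_add_emod a n]
  rw [zpow_add, zpow_mul, zpow_natCast, h, one_zpow, one_mul, ← zpow_natCast,
    Int.toNat_of_nonneg (Int.emod_nonneg _ (by exact_mod_cast hn.ne'))]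

theorem aux_forward {G : Type*} [Group G] (x y z : G) (hcxz : Commute x z) (hcyz : Commute y z)
    (hrel : x^(2:ℕ) * y * z^(2:ℕ) = 1) {a b c : ℤ} (H : x^a * y^b * z^c = 1) :
    x^(a - 2*b) * z^(c - 2*b) = 1 := by
  have hy_eq : y = (x ^ (2:ℕ) * z ^ (2:ℕ))⁻¹ := by
    apply eq_inv_of_mul_eq_one_right
    calc x ^ (2:ℕ) * z ^ (2:ℕ) * y = x ^ (2:ℕ) * (z ^ (2:ℕ) * y) := by rw [mul_assoc]
      _ = x ^ (2:ℕ) * (y * z ^ (2:ℕ)) := by rw [(hcyz.pow_right 2).eq]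
      _ = x ^ (2:ℕ) * y * z ^ (2:ℕ) := by rw [mul_assoc]
      _ = 1 := hrel
  rw [hy_eq, inv_zpow] at H
  have hexp : (x ^ (2:ℕ) * z ^ (2:ℕ)) ^ b = x ^ (2*b) * z ^ (2*b) := by
    rw [(hcxz.pow_pow 2 2).mul_zpow, ← zpow_natCast x 2, ← zpow_natCast z 2,
      ← zpow_mul, ← zpow_mul]
    norm_num
  rw [hexp] at H
  have hinv : (x ^ (2*b) * z ^ (2*b))⁻¹ = x ^ (-(2*b)) * z ^ (-(2*b)) := by
    rw [mul_inv_rev, ← zpow_neg, ← zpow_neg, (hcxz.zpow_zpow _ _).eq]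
  rw [hinv] at H
  rw [← H]
  group

theorem aux_backward {G : Type*} [CommGroup G] (v0 v1 v2 : G)
    (h18 : v0^(18:ℕ) = 1) (h9 : v1^(9:ℕ) = 1) (h3 : v2^(3:ℕ) = 1)
    (hrel : v0^(2:ℕ) * v1 * v2^(2:ℕ) = 1)
    (k s t u : ℤ) : v0^(2*k + 18*s) * v1^(k + 9*t) * v2^(2*k + 3*u) = 1 := by
  have h18' : v0 ^ ((18:ℤ)) = 1 := by rw [show ((18:ℤ)) = ((18:ℕ):ℤ) by norm_num, zpow_natCast, h18]
  have h9' : v1 ^ ((9:ℤ)) = 1 := by rw [show ((9:ℤ)) = ((9:ℕ):ℤ) by norm_num, zpow_natCast, h9]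
  have h3' : v2 ^ ((3:ℤ)) = 1 := by rw [show ((3:ℤ)) = ((3:ℕ):ℤ) by norm_num, zpow_natCast, h3]
  have hrel' : v0^(2:ℤ) * v1 * v2^(2:ℤ) = 1 := by
    rw [show ((2:ℤ)) = ((2:ℕ):ℤ) by norm_num, zpow_natCast, zpow_natCast, hrel]
  have e0 : v0 ^ (2*k + 18*s) = (v0 ^ (2:ℤ)) ^ k := by
    rw [zpow_add, zpow_mul, zpow_mul, h18', one_zpow, mul_one]
  have e1 : v1 ^ (k + 9*t) = v1 ^ k := by
    rw [zpow_add, zpow_mul, h9', one_zpow, mul_one]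
  have e2 : v2 ^ (2*k + 3*u) = (v2 ^ (2:ℤ)) ^ k := by
    rw [zpow_add, zpow_mul, zpow_mul, h3', one_zpow, mul_one]
  rw [e0, e1, e2, ← mul_zpow, ← mul_zpow, hrel', one_zpow]

end Cyclo9Aux

open Cyclo9Aux

/-- In the ring of integers of the 9th cyclotomic field, with
`ε₀ = −ζ²`, `ε₁ = ζ⁴ − ζ³ + ζ`, `ε₂ = ζ⁵ + ζ² − ζ` and
`𝔪 = ((1 + ζ + ζ⁴)⁴)`, for integers `a, b, c` one has
`ε₀^a ε₁^b ε₂^c ≡ 1 (mod 𝔪)` iff there is `k ∈ ℤ` with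
`a ≡ 2k (mod 18)`, `b ≡ k (mod 9)`, `c ≡ 2k (mod 3)`. -/
theorem unit_product_congruent_one_iff
    (K : Type*) [Field K] [NumberField K] [IsCyclotomicExtension {9} ℚ K]
    (ζ : 𝓞 K) (hζ : IsPrimitiveRoot ζ 9)
    (ε₀ ε₁ ε₂ : (𝓞 K)ˣ)
    (hε₀ : (ε₀ : 𝓞 K) = -ζ ^ 2)
    (hε₁ : (ε₁ : 𝓞 K) = ζ ^ 4 - ζ ^ 3 + ζ)
    (hε₂ : (ε₂ : 𝓞 K) = ζ ^ 5 + ζ ^ 2 - ζ)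
    (a b c : ℤ) :
    ((ε₀ ^ a * ε₁ ^ b * ε₂ ^ c : (𝓞 K)ˣ) : 𝓞 K) - 1
        ∈ Ideal.span {(1 + ζ + ζ ^ 4) ^ 4}
      ↔ ∃ k : ℤ, a ≡ 2 * k [ZMOD 18] ∧ b ≡ k [ZMOD 9] ∧ c ≡ 2 * k [ZMOD 3] := by
  have hζ9 : ζ ^ (9:ℕ) = 1 := hζ.pow_eq_one
  have hΦ : ζ^6 + ζ^3 + 1 = 0 := by
    have h3 : ζ^3 ≠ 1 := hζ.pow_ne_one_of_pos_of_lt (by norm_num) (by norm_num)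
    have hmul : (ζ^3 - 1) * (ζ^6 + ζ^3 + 1) = 0 := by linear_combination hζ9
    rcases mul_eq_zero.mp hmul with h | h
    · exact absurd (by linear_combination h) h3
    · exact h
  constructor
  · -- forward direction
    intro h
    -- construct the homomorphism to matrices
    have h9 : ((3:ℕ+)^2 : ℕ+) = 9 := rfl
    haveI : IsCyclotomicExtension {(((3:ℕ+)^2 : ℕ+) : ℕ)} ℚ K := by rw [h9]; exact (inferInstance : IsCyclotomicExtension {9} ℚ K)
    have hζK : IsPrimitiveRoot (algebraMap (𝓞 K) K ζ) (((3:ℕ+)^2 : ℕ+) : ℕ) :=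
      hζ.map_of_injective RingOfIntegers.coe_injective
    let pb := hζK.integralPowerBasis
    have hgen : pb.gen = ζ := by
      rw [IsPrimitiveRoot.integralPowerBasis_gen]
      exact Subtype.ext rfl
    have hmin : minpoly ℤ pb.gen = cyclotomic 9 ℤ := by
      rw [hgen, ← minpoly.algebraMap_eq RingOfIntegers.coe_injective ζ,
        ← cyclotomic_eq_minpoly hζK (by norm_num)]
      norm_num
    have hy : (aeval Mmat) (minpoly ℤ pb.gen) = 0 := by
      rw [hmin, show (9:ℕ) = 3^(1+1) by norm_num,
        cyclotomic_prime_pow_eq_geom_sum (by norm_num : Nat.Prime 3)]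
      simp only [map_sum, map_pow, map_add, map_one, aeval_X, Finset.sum_range_succ,
        Finset.sum_range_zero, zero_add, pow_zero, pow_one]
      decide
    let φ : 𝓞 K →ₐ[ℤ] Matrix (Fin 4) (Fin 4) (ZMod 3) := pb.lift Mmat hy
    have hφζ : φ ζ = Mmat := by rw [← hgen]; exact pb.lift_gen Mmat hy
    -- the product maps to 1
    obtain ⟨r, hr⟩ := Ideal.mem_span_singleton'.mp h
    have hm0 : φ ((1 + ζ + ζ ^ 4) ^ 4) = 0 := by
      simp only [map_pow, map_add, map_one, hφζ]
      decide
    have hφx : φ ((ε₀ ^ a * ε₁ ^ b * ε₂ ^ c : (𝓞 K)ˣ) : 𝓞 K) = 1 := by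
      have h2 := congrArg φ hr
      rw [map_mul, hm0, mul_zero, map_sub, map_one] at h2
      rw [← sub_eq_zero]
      exact h2.symm
    -- pass to units of the matrix ring
    set Uφ : (𝓞 K)ˣ →* (Matrix (Fin 4) (Fin 4) (ZMod 3))ˣ :=
      Units.map (φ.toRingHom : 𝓞 K →* Matrix (Fin 4) (Fin 4) (ZMod 3)) with hUφ
    set x := Uφ ε₀ with hxdef
    set y := Uφ ε₁ with hydef
    set z := Uφ ε₂ with hzdef
    have hvx : (x : Matrix (Fin 4) (Fin 4) (ZMod 3)) = Amat := by
      show φ (ε₀ : 𝓞 K) = Amat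
      rw [hε₀, map_neg, map_pow, hφζ]; rfl
    have hvy : (y : Matrix (Fin 4) (Fin 4) (ZMod 3)) = Bmat := by
      show φ (ε₁ : 𝓞 K) = Bmat
      rw [hε₁, map_add, map_sub, map_pow, map_pow, hφζ]; rfl
    have hvz : (z : Matrix (Fin 4) (Fin 4) (ZMod 3)) = Cmat := by
      show φ (ε₂ : 𝓞 K) = Cmat
      rw [hε₂, map_sub, map_add, map_pow, map_pow, hφζ]; rfl
    have H : x ^ a * y ^ b * z ^ c = 1 := by
      have hmap : Uφ (ε₀ ^ a * ε₁ ^ b * ε₂ ^ c) = x ^ a * y ^ b * z ^ c := by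
        rw [map_mul, map_mul, map_zpow, map_zpow, map_zpow]
      rw [← hmap]
      exact Units.ext hφx
    have h18 : x ^ (18:ℕ) = 1 := by
      apply Units.ext
      rw [Units.val_pow_eq_pow_val, hvx, Units.val_one]
      decide
    have h3z : z ^ (3:ℕ) = 1 := by
      apply Units.ext
      rw [Units.val_pow_eq_pow_val, hvz, Units.val_one]
      decide
    have hrelu : x ^ (2:ℕ) * y * z ^ (2:ℕ) = 1 := by
      apply Units.ext
      rw [Units.val_mul, Units.val_mul, Units.val_pow_eq_pow_val, Units.val_pow_eq_pow_val,
        hvx, hvy, hvz, Units.val_one]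
      decide
    have hcxz : Commute x z := by
      apply Units.ext
      rw [Units.val_mul, Units.val_mul, hvx, hvz]
      decide
    have hcyz : Commute y z := by
      apply Units.ext
      rw [Units.val_mul, Units.val_mul, hvy, hvz]
      decide
    have F : x ^ (a - 2*b) * z ^ (c - 2*b) = 1 :=
      aux_forward x y z hcxz hcyz hrelu H
    rw [zpow_emod_eq x (by norm_num) h18, zpow_emod_eq z (by norm_num) h3z] at F
    have Fm : Amat ^ ((a - 2*b) % (18:ℤ)).toNat * Cmat ^ ((c - 2*b) % (3:ℤ)).toNat = 1 := by
      have h2 := congrArg Units.val F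
      rwa [Units.val_mul, Units.val_pow_eq_pow_val, Units.val_pow_eq_pow_val,
        hvx, hvz, Units.val_one] at h2
    have hi : ((a - 2*b) % (18:ℤ)).toNat < 18 := by omega
    have hj : ((c - 2*b) % (3:ℤ)).toNat < 3 := by omega
    obtain ⟨hi0, hj0⟩ := key _ hi _ hj Fm
    refine ⟨b, ?_, Int.ModEq.refl b, ?_⟩
    · show a % 18 = (2*b) % 18
      omega
    · show c % 3 = (2*b) % 3
      omega
  · -- backward direction
    rintro ⟨k, h1, h2, h3⟩
    obtain ⟨s, hs⟩ : ∃ s : ℤ, a = 2*k + 18*s := by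
      have := Int.ModEq.dvd h1
      exact ⟨(2*k - a)/(-18), by omega⟩
    obtain ⟨t, ht⟩ : ∃ t : ℤ, b = k + 9*t := by
      have := Int.ModEq.dvd h2
      exact ⟨(k - b)/(-9), by omega⟩
    obtain ⟨u, hu⟩ : ∃ u : ℤ, c = 2*k + 3*u := by
      have := Int.ModEq.dvd h3
      exact ⟨(2*k - c)/(-3), by omega⟩
    set I : Ideal (𝓞 K) := Ideal.span {(1 + ζ + ζ ^ 4) ^ 4} with hI
    set Q : 𝓞 K →+* 𝓞 K ⧸ I := Ideal.Quotient.mk I with hQ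
    set UQ : (𝓞 K)ˣ →* (𝓞 K ⧸ I)ˣ := Units.map (Q : 𝓞 K →* 𝓞 K ⧸ I) with hUQ
    set v₀ := UQ ε₀ with hv₀
    set v₁ := UQ ε₁ with hv₁
    set v₂ := UQ ε₂ with hv₂
    -- torsion relations
    have key0 : v₀ ^ ((18:ℕ):ℤ) = 1 := by
      rw [zpow_natCast, ← map_pow]
      have : ε₀ ^ (18:ℕ) = 1 := by
        apply Units.ext
        rw [Units.val_pow_eq_pow_val, hε₀, Units.val_one]
        linear_combination (ζ^27 + ζ^18 + ζ^9 + 1) * hζ9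
      rw [this, map_one]
    have key1 : v₁ ^ ((9:ℕ):ℤ) = 1 := by
      rw [zpow_natCast]
      apply Units.ext
      rw [Units.val_pow_eq_pow_val, Units.val_one]
      show Q ((ε₁ : 𝓞 K)) ^ (9:ℕ) = 1
      rw [← map_pow, ← map_one Q]
      rw [Ideal.Quotient.mk_eq_mk_iff_sub_mem]
      rw [hε₁]
      rw [Ideal.mem_span_singleton']
      refine ⟨(36 : 𝓞 K) + (-36 : 𝓞 K) * ζ^2 + (87 : 𝓞 K) * ζ^3 + (-66 : 𝓞 K) * ζ^4 + (51 : 𝓞 K) * ζ^5, ?_⟩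
      linear_combination ( (37 : 𝓞 K) + (144 : 𝓞 K) * ζ + (180 : 𝓞 K) * ζ^2 + (50 : 𝓞 K) * ζ^3 + (102 : 𝓞 K) * ζ^4 + (417 : 𝓞 K) * ζ^5 + (321 : 𝓞 K) * ζ^6 + (-57 : 𝓞 K) * ζ^7 + (105 : 𝓞 K) * ζ^8 + (423 : 𝓞 K) * ζ^9 + (123 : 𝓞 K) * ζ^10 + (-75 : 𝓞 K) * ζ^11 + (27 : 𝓞 K) * ζ^12 + (78 : 𝓞 K) * ζ^13 + (114 : 𝓞 K) * ζ^14 + (108 : 𝓞 K) * ζ^15 + (-333 : 𝓞 K) * ζ^16 + (27 : 𝓞 K) * ζ^17 + (453 : 𝓞 K) * ζ^18 + (-288 : 𝓞 K) * ζ^19 + (-333 : 𝓞 K) * ζ^20 + (540 : 𝓞 K) * ζ^21 + (-135 : 𝓞 K) * ζ^22 + (-288 : 𝓞 K) * ζ^23 + (309 : 𝓞 K) * ζ^24 + (-90 : 𝓞 K) * ζ^25 + (-63 : 𝓞 K) * ζ^26 + (76 : 𝓞 K) * ζ^27 + (-36 : 𝓞 K) * ζ^28 + (9 : 𝓞 K)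 * ζ^29 + (-1 : 𝓞 K) * ζ^30 ) * hΦ
    have key2 : v₂ ^ ((3:ℕ):ℤ) = 1 := by
      rw [zpow_natCast]
      apply Units.ext
      rw [Units.val_pow_eq_pow_val, Units.val_one]
      show Q ((ε₂ : 𝓞 K)) ^ (3:ℕ) = 1
      rw [← map_pow, ← map_one Q]
      rw [Ideal.Quotient.mk_eq_mk_iff_sub_mem]
      rw [hε₂]
      rw [Ideal.mem_span_singleton']
      refine ⟨(-3 : 𝓞 K) + (3 : 𝓞 K) * ζ^2 + (-10 : 𝓞 K) * ζ^3 + (8 : 𝓞 K) * ζ^4 + (-7 : 𝓞 K) * ζ^5, ?_⟩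
      linear_combination ( (-2 : 𝓞 K) + (-12 : 𝓞 K) * ζ + (-15 : 𝓞 K) * ζ^2 + (-7 : 𝓞 K) * ζ^3 + (-20 : 𝓞 K) * ζ^4 + (-41 : 𝓞 K) * ζ^5 + (-33 : 𝓞 K) * ζ^6 + (-7 : 𝓞 K) * ζ^7 + (-28 : 𝓞 K) * ζ^8 + (-46 : 𝓞 K) * ζ^9 + (-1 : 𝓞 K) * ζ^10 + (-4 : 𝓞 K) * ζ^11 + (-18 : 𝓞 K) * ζ^12 + (-10 : 𝓞 K) * ζ^13 + (8 : 𝓞 K) * ζ^14 + (-7 : 𝓞 K) * ζ^15 ) * hΦ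
    have keyrel : v₀ ^ ((2:ℕ):ℤ) * v₁ * v₂ ^ ((2:ℕ):ℤ) = 1 := by
      rw [zpow_natCast, zpow_natCast]
      apply Units.ext
      rw [Units.val_mul, Units.val_mul, Units.val_pow_eq_pow_val, Units.val_pow_eq_pow_val,
        Units.val_one]
      show Q ((ε₀ : 𝓞 K)) ^ (2:ℕ) * Q ((ε₁ : 𝓞 K)) * Q ((ε₂ : 𝓞 K)) ^ (2:ℕ) = 1
      rw [← map_pow, ← map_pow, ← map_mul, ← map_mul, ← map_one Q]
      rw [Ideal.Quotient.mk_eq_mk_iff_sub_mem]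
      rw [hε₀, hε₁, hε₂]
      rw [Ideal.mem_span_singleton']
      refine ⟨(4 : 𝓞 K) + (-4 : 𝓞 K) * ζ^2 + (11 : 𝓞 K) * ζ^3 + (-10 : 𝓞 K) * ζ^4 + (7 : 𝓞 K) * ζ^5, ?_⟩
      linear_combination ( (5 : 𝓞 K) + (16 : 𝓞 K) * ζ + (20 : 𝓞 K) * ζ^2 + (6 : 𝓞 K) * ζ^3 + (14 : 𝓞 K) * ζ^4 + (45 : 𝓞 K) * ζ^5 + (29 : 𝓞 K) * ζ^6 + (-6 : 𝓞 K) * ζ^7 + (23 : 𝓞 K) * ζ^8 + (44 : 𝓞 K) * ζ^9 + (-3 : 𝓞 K) * ζ^10 + (-1 : 𝓞 K) * ζ^11 + (16 : 𝓞 K) * ζ^12 + (11 : 𝓞 K) * ζ^13 + (-10 : 𝓞 K) * ζ^14 + (7 : 𝓞 K) * ζ^15 ) * hΦ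
    -- conclude
    have key0' : v₀ ^ (18:ℕ) = 1 := by
      have := key0; rwa [zpow_natCast] at this
    have key1' : v₁ ^ (9:ℕ) = 1 := by
      have := key1; rwa [zpow_natCast] at this
    have key2' : v₂ ^ (3:ℕ) = 1 := by
      have := key2; rwa [zpow_natCast] at this
    have keyrel' : v₀ ^ (2:ℕ) * v₁ * v₂ ^ (2:ℕ) = 1 := by
      have := keyrel; rwa [zpow_natCast, zpow_natCast] at this
    have main : v₀ ^ a * v₁ ^ b * v₂ ^ c = 1 := by
      rw [hs, ht, hu]
      exact aux_backward v₀ v₁ v₂ key0' key1' key2' keyrel' k s t u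
    have hQx : Q ((ε₀ ^ a * ε₁ ^ b * ε₂ ^ c : (𝓞 K)ˣ) : 𝓞 K) = 1 := by
      have hmap : UQ (ε₀ ^ a * ε₁ ^ b * ε₂ ^ c) = v₀ ^ a * v₁ ^ b * v₂ ^ c := by
        rw [map_mul, map_mul, map_zpow, map_zpow, map_zpow]
      have h2 : UQ (ε₀ ^ a * ε₁ ^ b * ε₂ ^ c) = 1 := by rw [hmap, main]
      have h3 := congrArg Units.val h2
      exact h3
    rw [← Ideal.Quotient.mk_eq_mk_iff_sub_mem]
    rw [show ((1:𝓞 K ⧸ I) = Q 1) from (map_one Q).symm] at hQx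
    exact hQx
end

section
/- Let K = ℚ(ζ) be the 9th cyclotomic field where ζ is a primitive 9th root of unity, let 𝒪 be its ring of integers, and let 𝔪 be the ideal of 𝒪 generated by (1 + ζ + ζ⁴)⁴. Set ε₀ = −ζ², ε₁ = ζ⁴ − ζ³ + ζ, ε₂ = ζ⁵ + ζ² − ζ, and let σ₁, σ₅, σ₇ be the ℚ-automorphisms of K determined by σᵢ(ζ) = ζ^i. If integers a, b, c satisfy ε₀^a ε₁^b ε₂^c ≡ 1 (mod 𝔪), then, writing u = ε₀^a ε₁^b ε₂^c, one has σ₁(u) · σ₅(u) · σ₇(u) = 1. -/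
open NumberField

set_option maxHeartbeats 4000000

/-- In the 9th cyclotomic field `K = ℚ(ζ)` with ring of integers `𝒪` and
`𝔪 = ((1 + ζ + ζ⁴)⁴)`, if `u = ε₀^a ε₁^b ε₂^c ≡ 1 (mod 𝔪)` then
`σ₁(u)·σ₅(u)·σ₇(u) = 1`, where `σᵢ(ζ) = ζ^i`. -/
theorem reflex_norm_of_unit_congruent_one
    (K : Type*) [Field K] [NumberField K] [IsCyclotomicExtension {9} ℚ K]
    (ζ : 𝓞 K) (hζ : IsPrimitiveRoot ζ 9)
    (ε₀ ε₁ ε₂ : (𝓞 K)ˣ)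
    (hε₀ : (ε₀ : 𝓞 K) = -ζ ^ 2)
    (hε₁ : (ε₁ : 𝓞 K) = ζ ^ 4 - ζ ^ 3 + ζ)
    (hε₂ : (ε₂ : 𝓞 K) = ζ ^ 5 + ζ ^ 2 - ζ)
    (σ₁ σ₅ σ₇ : K ≃ₐ[ℚ] K)
    (hσ₁ : σ₁ ((ζ : 𝓞 K) : K) = ((ζ : 𝓞 K) : K) ^ 1)
    (hσ₅ : σ₅ ((ζ : 𝓞 K) : K) = ((ζ : 𝓞 K) : K) ^ 5)
    (hσ₇ : σ₇ ((ζ : 𝓞 K) : K) = ((ζ : 𝓞 K) : K) ^ 7)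
    (a b c : ℤ)
    (h : ((ε₀ ^ a * ε₁ ^ b * ε₂ ^ c : (𝓞 K)ˣ) : 𝓞 K) - 1
      ∈ Ideal.span {(1 + ζ + ζ ^ 4) ^ 4}) :
    σ₁ (((ε₀ ^ a * ε₁ ^ b * ε₂ ^ c : (𝓞 K)ˣ) : 𝓞 K) : K)
      * σ₅ (((ε₀ ^ a * ε₁ ^ b * ε₂ ^ c : (𝓞 K)ˣ) : 𝓞 K) : K)
      * σ₇ (((ε₀ ^ a * ε₁ ^ b * ε₂ ^ c : (𝓞 K)ˣ) : 𝓞 K) : K) = 1 := by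
  have hinj : Function.Injective (algebraMap (𝓞 K) K) := RingOfIntegers.coe_injective
  have e9 : ζ ^ 9 = 1 := hζ.pow_eq_one
  have hζ3 : ζ ^ 3 ≠ 1 := hζ.pow_ne_one_of_pos_of_lt (by norm_num) (by norm_num)
  have e3 : ζ ^ 6 + ζ ^ 3 + 1 = 0 := by
    rcases mul_eq_zero.mp (show (ζ ^ 3 - 1) * (ζ ^ 6 + ζ ^ 3 + 1) = 0 by
      linear_combination e9) with h0 | h0
    · exact absurd (by linear_combination h0) hζ3
    · exact h0
  set τ₁ : 𝓞 K ≃ₐ[ℤ] 𝓞 K := galRestrict ℤ ℚ K (𝓞 K) σ₁ with hτ₁def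
  set τ₅ : 𝓞 K ≃ₐ[ℤ] 𝓞 K := galRestrict ℤ ℚ K (𝓞 K) σ₅ with hτ₅def
  set τ₇ : 𝓞 K ≃ₐ[ℤ] 𝓞 K := galRestrict ℤ ℚ K (𝓞 K) σ₇ with hτ₇def
  have hcoe₁ : ∀ x : 𝓞 K, algebraMap (𝓞 K) K (τ₁ x) = σ₁ (algebraMap (𝓞 K) K x) :=
    fun x => algebraMap_galRestrict_apply ℤ σ₁ x
  have hcoe₅ : ∀ x : 𝓞 K, algebraMap (𝓞 K) K (τ₅ x) = σ₅ (algebraMap (𝓞 K) K x) :=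
    fun x => algebraMap_galRestrict_apply ℤ σ₅ x
  have hcoe₇ : ∀ x : 𝓞 K, algebraMap (𝓞 K) K (τ₇ x) = σ₇ (algebraMap (𝓞 K) K x) :=
    fun x => algebraMap_galRestrict_apply ℤ σ₇ x
  have hτζ₁ : τ₁ ζ = ζ ^ 1 := by apply hinj; rw [hcoe₁, map_pow]; exact hσ₁
  have hτζ₅ : τ₅ ζ = ζ ^ 5 := by apply hinj; rw [hcoe₅, map_pow]; exact hσ₅
  have hτζ₇ : τ₇ ζ = ζ ^ 7 := by apply hinj; rw [hcoe₇, map_pow]; exact hσ₇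
  set zu : (𝓞 K)ˣ := ⟨ζ, ζ ^ 8, by linear_combination e9, by linear_combination e9⟩
    with hzudef
  have hzuval : (zu : 𝓞 K) = ζ := rfl
  have hzu9 : zu ^ (9 : ℕ) = 1 := by
    apply Units.ext
    rw [Units.val_pow_eq_pow_val, hzuval, Units.val_one]; exact e9
  set N : (𝓞 K)ˣ →* (𝓞 K)ˣ :=
    (Units.map τ₁.toAlgHom.toRingHom.toMonoidHom) *
    (Units.map τ₅.toAlgHom.toRingHom.toMonoidHom) *
    (Units.map τ₇.toAlgHom.toRingHom.toMonoidHom) with hNdef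
  have hNval : ∀ u : (𝓞 K)ˣ, ((N u : (𝓞 K)ˣ) : 𝓞 K)
      = τ₁ (u : 𝓞 K) * τ₅ (u : 𝓞 K) * τ₇ (u : 𝓞 K) := fun u => rfl
  have hv10 : τ₁ (ε₀ : 𝓞 K) = -(ζ ^ 1) ^ 2 := by
    rw [hε₀, map_neg, map_pow, hτζ₁]
  have hv50 : τ₅ (ε₀ : 𝓞 K) = -(ζ ^ 5) ^ 2 := by
    rw [hε₀, map_neg, map_pow, hτζ₅]
  have hv70 : τ₇ (ε₀ : 𝓞 K) = -(ζ ^ 7) ^ 2 := by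
    rw [hε₀, map_neg, map_pow, hτζ₇]
  have hv11 : τ₁ (ε₁ : 𝓞 K) = (ζ ^ 1) ^ 4 - (ζ ^ 1) ^ 3 + ζ ^ 1 := by
    rw [hε₁]; simp only [map_add, map_sub, map_pow, hτζ₁]
  have hv51 : τ₅ (ε₁ : 𝓞 K) = (ζ ^ 5) ^ 4 - (ζ ^ 5) ^ 3 + ζ ^ 5 := by
    rw [hε₁]; simp only [map_add, map_sub, map_pow, hτζ₅]
  have hv71 : τ₇ (ε₁ : 𝓞 K) = (ζ ^ 7) ^ 4 - (ζ ^ 7) ^ 3 + ζ ^ 7 := by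
    rw [hε₁]; simp only [map_add, map_sub, map_pow, hτζ₇]
  have hv12 : τ₁ (ε₂ : 𝓞 K) = (ζ ^ 1) ^ 5 + (ζ ^ 1) ^ 2 - ζ ^ 1 := by
    rw [hε₂]; simp only [map_add, map_sub, map_pow, hτζ₁]
  have hv52 : τ₅ (ε₂ : 𝓞 K) = (ζ ^ 5) ^ 5 + (ζ ^ 5) ^ 2 - ζ ^ 5 := by
    rw [hε₂]; simp only [map_add, map_sub, map_pow, hτζ₅]
  have hv72 : τ₇ (ε₂ : 𝓞 K) = (ζ ^ 7) ^ 5 + (ζ ^ 7) ^ 2 - ζ ^ 7 := by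
    rw [hε₂]; simp only [map_add, map_sub, map_pow, hτζ₇]
  have hNe0 : N ε₀ = -1 * zu ^ (8 : ℕ) := by
    apply Units.ext
    rw [Units.val_mul, Units.val_neg, Units.val_one, Units.val_pow_eq_pow_val, hzuval,
      hNval, hv10, hv50, hv70]
    linear_combination ((1)*ζ^8 + (-1)*ζ^11 + (1)*ζ^17 + (-1)*ζ^20) * e3
  have hNe1 : N ε₁ = zu ^ (2 : ℕ) := by
    apply Units.ext
    rw [Units.val_pow_eq_pow_val, hzuval, hNval, hv11, hv51, hv71]
    linear_combination ((-1)*ζ^2 + (1)*ζ^5 + (-1)*ζ^11 + (1)*ζ^13 + (1)*ζ^14 + (-1)*ζ^15 + (1)*ζ^18 + (-1)*ζ^19 + (-1)*ζ^20 + (1)*ζ^22 + (-1)*ζ^24 + (1)*ζ^25 + (-1)*ζ^28 + (1)*ζ^29 + (-1)*ζ^30 + (1)*ζ^31 + (-1)*ζ^32 + (1)*ζ^33 + (1)*ζ^34 + (-1)*ζ^36 + (1)*ζ^38 + (-1)*ζ^39 + (-1)*ζ^41 + (1)*ζ^42 + (-1)*ζ^45 + (1)*ζ^46) * e3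
  have hNe2 : N ε₂ = 1 := by
    apply Units.ext
    rw [Units.val_one, hNval, hv12, hv52, hv72]
    linear_combination ((-1) + (1)*ζ^3 + (-1)*ζ^9 + (1)*ζ^12 + (-1)*ζ^13 + (1)*ζ^14 + (1)*ζ^16 + (-1)*ζ^19 + (-1)*ζ^21 + (-1)*ζ^22 + (1)*ζ^25 + (1)*ζ^26 + (1)*ζ^27 + (-1)*ζ^30 + (-1)*ζ^31 + (-1)*ζ^32 + (1)*ζ^33 + (1)*ζ^35 + (-1)*ζ^39 + (-1)*ζ^40 + (1)*ζ^41 + (1)*ζ^43 + (-1)*ζ^46 + (1)*ζ^50 + (1)*ζ^52 + (-1)*ζ^53 + (-1)*ζ^55 + (1)*ζ^59) * e3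
  have hNP : N (ε₀ ^ a * ε₁ ^ b * ε₂ ^ c) = (-1) ^ a * zu ^ (8 * a + 2 * b) := by
    rw [map_mul, map_mul, map_zpow, map_zpow, map_zpow, hNe0, hNe1, hNe2, one_zpow,
      mul_one, mul_zpow, ← zpow_natCast zu 8, ← zpow_natCast zu 2, ← zpow_mul, ← zpow_mul,
      mul_assoc, ← zpow_add]
    norm_num
  -- congruence side
  obtain ⟨t₀, ht₀⟩ : (1 + ζ + ζ ^ 4) ^ 4 ∣ ((ε₀ ^ a * ε₁ ^ b * ε₂ ^ c : (𝓞 K)ˣ) : 𝓞 K) - 1 :=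
    Ideal.mem_span_singleton.mp h
  have hm1 : τ₁ ((1 + ζ + ζ ^ 4) ^ 4) = 1 * (1 + ζ + ζ ^ 4) ^ 4 := by
    simp only [map_pow, map_add, map_one, hτζ₁]; ring
  have hm5 : τ₅ ((1 + ζ + ζ ^ 4) ^ 4) = ((9) + (-17)*ζ + (23)*ζ^2 + (-17)*ζ^3 + (9)*ζ^4) * (1 + ζ + ζ ^ 4) ^ 4 := by
    simp only [map_pow, map_add, map_one, hτζ₅]
    linear_combination ((-8) + (-19)*ζ + (-9)*ζ^2 + (-1)*ζ^3 + (-37)*ζ^4 + (-36)*ζ^5 + (4)*ζ^6 + (-3)*ζ^7 + (-58)*ζ^8 + (-5)*ζ^9 + (18)*ζ^10 + (-14)*ζ^11 + (-23)*ζ^12 + (11)*ζ^13 + (-6)*ζ^14 + (8)*ζ^15 + (-6)*ζ^16 + (1)*ζ^17 + (-8)*ζ^18 + (12)*ζ^19 + (1)*ζ^20 + (-6)*ζ^22 + (-2)*ζ^23 + (8)*ζ^24 + (6)*ζ^25 + (1)*ζ^26 + (-8)*ζ^27 + (1)*ζ^29 + (12)*ζ^30 + (-6)*ζ^31 + (-2)*ζ^32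 + (-4)*ζ^33 + (6)*ζ^34 + (5)*ζ^35 + (-8)*ζ^36 + (-3)*ζ^38 + (12)*ζ^39 + (-2)*ζ^41 + (-4)*ζ^42 + (5)*ζ^44 + (4)*ζ^45 + (-3)*ζ^47 + (4)*ζ^50 + (-4)*ζ^51 + (-1)*ζ^53 + (4)*ζ^54 + (-3)*ζ^56 + (4)*ζ^59 + (-1)*ζ^62 + (1)*ζ^65 + (-1)*ζ^71 + (1)*ζ^74) * e3
  have hm7 : τ₇ ((1 + ζ + ζ ^ 4) ^ 4) = ((3)*ζ + (-1)*ζ^2 + (6)*ζ^3 + (-1)*ζ^4 + (3)*ζ^5) * (1 + ζ + ζ ^ 4) ^ 4 := by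
    simp only [map_pow, map_add, map_one, hτζ₇]
    linear_combination ((1) + (-3)*ζ + (-11)*ζ^2 + (-21)*ζ^3 + (-26)*ζ^4 + (-35)*ζ^5 + (-41)*ζ^6 + (-35)*ζ^7 + (-33)*ζ^8 + (-27)*ζ^9 + (-17)*ζ^10 + (-6)*ζ^11 + (-4)*ζ^12 + (-2)*ζ^13 + (7)*ζ^14 + (-7)*ζ^15 + (-1)*ζ^16 + (-12)*ζ^17 + (-3)*ζ^19 + (6)*ζ^20 + (8)*ζ^21 + (4)*ζ^22 + (6)*ζ^23 + (-8)*ζ^24 + (-1)*ζ^25 + (-12)*ζ^26 + (2)*ζ^28 + (6)*ζ^29 + (8)*ζ^30 + (-1)*ζ^31 + (6)*ζ^32 + (-8)*ζ^33 + (-1)*ζ^34 + (2)*ζ^37 + (-6)*ζ^38 + (8)*ζ^39 + (-1)*ζ^40 + (6)*ζ^41 + (4)*ζ^42 + (-1)*ζ^43 + (-12)*ζ^45 + (2)*ζ^46 + (-6)*ζ^47 + (8)*ζ^48 + (3)*ζ^49 + (6)*ζ^50 + (4)*ζ^51 + (-5)*ζ^52 + (-12)*ζ^54 + (2)*ζ^55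 + (8)*ζ^57 + (3)*ζ^58 + (4)*ζ^60 + (-5)*ζ^61 + (2)*ζ^64 + (-4)*ζ^66 + (3)*ζ^67 + (4)*ζ^69 + (1)*ζ^70 + (-4)*ζ^73 + (-4)*ζ^75 + (3)*ζ^76 + (4)*ζ^78 + (1)*ζ^79 + (-4)*ζ^82 + (3)*ζ^85 + (1)*ζ^88 + (-1)*ζ^94 + (1)*ζ^97 + (-1)*ζ^103 + (1)*ζ^106) * e3
  have hc1 : (1 + ζ + ζ ^ 4) ^ 4 ∣ τ₁ ((ε₀ ^ a * ε₁ ^ b * ε₂ ^ c : (𝓞 K)ˣ) : 𝓞 K) - 1 := by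
    refine ⟨1 * τ₁ t₀, ?_⟩
    have h2 : τ₁ (((ε₀ ^ a * ε₁ ^ b * ε₂ ^ c : (𝓞 K)ˣ) : 𝓞 K) - 1)
        = (1 + ζ + ζ ^ 4) ^ 4 * (1 * τ₁ t₀) := by
      rw [ht₀, map_mul, hm1]; ring
    rw [map_sub, map_one] at h2; exact h2
  have hc5 : (1 + ζ + ζ ^ 4) ^ 4 ∣ τ₅ ((ε₀ ^ a * ε₁ ^ b * ε₂ ^ c : (𝓞 K)ˣ) : 𝓞 K) - 1 := by
    refine ⟨((9) + (-17)*ζ + (23)*ζ^2 + (-17)*ζ^3 + (9)*ζ^4) * τ₅ t₀, ?_⟩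
    have h2 : τ₅ (((ε₀ ^ a * ε₁ ^ b * ε₂ ^ c : (𝓞 K)ˣ) : 𝓞 K) - 1)
        = (1 + ζ + ζ ^ 4) ^ 4 * (((9) + (-17)*ζ + (23)*ζ^2 + (-17)*ζ^3 + (9)*ζ^4) * τ₅ t₀) := by
      rw [ht₀, map_mul, hm5]; ring
    rw [map_sub, map_one] at h2; exact h2
  have hc7 : (1 + ζ + ζ ^ 4) ^ 4 ∣ τ₇ ((ε₀ ^ a * ε₁ ^ b * ε₂ ^ c : (𝓞 K)ˣ) : 𝓞 K) - 1 := by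
    refine ⟨((3)*ζ + (-1)*ζ^2 + (6)*ζ^3 + (-1)*ζ^4 + (3)*ζ^5) * τ₇ t₀, ?_⟩
    have h2 : τ₇ (((ε₀ ^ a * ε₁ ^ b * ε₂ ^ c : (𝓞 K)ˣ) : 𝓞 K) - 1)
        = (1 + ζ + ζ ^ 4) ^ 4 * (((3)*ζ + (-1)*ζ^2 + (6)*ζ^3 + (-1)*ζ^4 + (3)*ζ^5) * τ₇ t₀) := by
      rw [ht₀, map_mul, hm7]; ring
    rw [map_sub, map_one] at h2; exact h2
  have hNm : (1 + ζ + ζ ^ 4) ^ 4 ∣ ((N (ε₀ ^ a * ε₁ ^ b * ε₂ ^ c) : (𝓞 K)ˣ) : 𝓞 K) - 1 := by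
    rw [hNval]
    obtain ⟨x1, h1⟩ := hc1
    obtain ⟨x5, h5⟩ := hc5
    obtain ⟨x7, h7⟩ := hc7
    refine ⟨x1 * (τ₅ ((ε₀ ^ a * ε₁ ^ b * ε₂ ^ c : (𝓞 K)ˣ) : 𝓞 K)
        * τ₇ ((ε₀ ^ a * ε₁ ^ b * ε₂ ^ c : (𝓞 K)ˣ) : 𝓞 K))
      + x5 * τ₇ ((ε₀ ^ a * ε₁ ^ b * ε₂ ^ c : (𝓞 K)ˣ) : 𝓞 K) + x7, ?_⟩
    linear_combination (τ₅ ((ε₀ ^ a * ε₁ ^ b * ε₂ ^ c : (𝓞 K)ˣ) : 𝓞 K)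
        * τ₇ ((ε₀ ^ a * ε₁ ^ b * ε₂ ^ c : (𝓞 K)ˣ) : 𝓞 K)) * h1
      + (τ₇ ((ε₀ ^ a * ε₁ ^ b * ε₂ ^ c : (𝓞 K)ˣ) : 𝓞 K)) * h5 + h7
  -- pi facts
  have hπ0 : ζ - 1 ≠ 0 := sub_ne_zero.mpr (hζ.ne_one (by norm_num))
  have h3NU : ¬ IsUnit (3 : 𝓞 K) := by
    intro hu
    have h2 := NumberField.isUnit_iff_norm.mp hu
    rw [RingOfIntegers.coe_norm] at h2
    have h4 : ((3 : 𝓞 K) : K) = algebraMap ℚ K 3 := by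
      simp [RingOfIntegers.coe_eq_algebraMap]; norm_num [map_ofNat]
    rw [h4, Algebra.norm_algebraMap] at h2
    have hpos : 0 < Module.finrank ℚ K := Module.finrank_pos
    have hgt : (1 : ℚ) < 3 ^ Module.finrank ℚ K := one_lt_pow₀ (by norm_num) hpos.ne'
    rw [abs_of_pos (by positivity)] at h2
    linarith
  have hw6 : (ζ - 1) ^ 6 = 3 * ((-2)*ζ + (5)*ζ^2 + (-7)*ζ^3 + (5)*ζ^4 + (-2)*ζ^5) := by linear_combination e3
  have hw6i : (((-2)*ζ + (5)*ζ^2 + (-7)*ζ^3 + (5)*ζ^4 + (-2)*ζ^5) : 𝓞 K) * ((10) + (11)*ζ + (7)*ζ^2 + (10)*ζ^3 + (4)*ζ^4 + (-4)*ζ^5) = 1 := by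
    linear_combination ((-1) + (-20)*ζ + (28)*ζ^2 + (-28)*ζ^3 + (8)*ζ^4) * e3
  have hπu : ¬ IsUnit (ζ - 1) := by
    intro hu
    apply h3NU
    have h31 : (3 : 𝓞 K) = (ζ - 1) ^ 6 * ((10) + (11)*ζ + (7)*ζ^2 + (10)*ζ^3 + (4)*ζ^4 + (-4)*ζ^5) := by
      linear_combination (-((10) + (11)*ζ + (7)*ζ^2 + (10)*ζ^3 + (4)*ζ^4 + (-4)*ζ^5)) * hw6 - 3 * hw6i
    rw [h31]
    exact (hu.pow 6).mul (IsUnit.of_mul_eq_one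
      ((-2)*ζ + (5)*ζ^2 + (-7)*ζ^3 + (5)*ζ^4 + (-2)*ζ^5) (by linear_combination hw6i))
  have hπ4m : (ζ - 1) ^ 4 ∣ (1 + ζ + ζ ^ 4) ^ 4 := by
    refine ⟨((1)*ζ + (4)*ζ^2 + (6)*ζ^3 + (4)*ζ^4 + (1)*ζ^5), ?_⟩
    linear_combination ((1) + (3)*ζ + (6)*ζ^2 + (7)*ζ^3 + (2)*ζ^4 + (4)*ζ^6 + (3)*ζ^7 + (1)*ζ^10) * e3
  have key : N (ε₀ ^ a * ε₁ ^ b * ε₂ ^ c) = 1 := by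
    obtain ⟨q, r, hr0, hr9, hEq⟩ : ∃ q r : ℤ, 0 ≤ r ∧ r < 9 ∧ 8 * a + 2 * b = 9 * q + r :=
      ⟨(8 * a + 2 * b) / 9, (8 * a + 2 * b) % 9, Int.emod_nonneg _ (by norm_num),
        Int.emod_lt_of_pos _ (by norm_num), (Int.mul_ediv_add_emod _ _).symm⟩
    lift r to ℕ using hr0 with r hr
    have hr9' : r < 9 := by exact_mod_cast hr9
    have hzr : zu ^ (8 * a + 2 * b : ℤ) = zu ^ r := by
      rw [hEq, zpow_add, zpow_mul, show ((9 : ℤ)) = ((9 : ℕ) : ℤ) from by norm_num,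
        zpow_natCast, hzu9, one_zpow, one_mul, zpow_natCast]
    rw [hzr] at hNP
    rcases Int.even_or_odd a with ha | ha
    · have hsgn : ((-1 : (𝓞 K)ˣ)) ^ a = 1 := ha.neg_one_zpow
      rw [hsgn, one_mul] at hNP
      have hval : ((N (ε₀ ^ a * ε₁ ^ b * ε₂ ^ c) : (𝓞 K)ˣ) : 𝓞 K) = ζ ^ r := by
        rw [hNP, Units.val_pow_eq_pow_val]
      rw [hval] at hNm
      obtain ⟨d, hd⟩ := hπ4m.trans hNm
      interval_cases r
      · rw [pow_zero] at hNP; exact hNP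
      · exfalso; apply hπu
        have hu1 : (ζ ^ 1 - 1) * ((1)) = ζ - 1 := by ring
        have hE1 : (ζ - 1) * ((ζ - 1) ^ 2 * (d * ((1)))) = 1 := by
          apply mul_left_cancel₀ hπ0
          linear_combination (-((1))) * hd + hu1
        exact IsUnit.of_mul_eq_one _ hE1
      · exfalso; apply hπu
        have hu1 : (ζ ^ 2 - 1) * ((-1)*ζ^3 + (1)*ζ^4 + (-1)*ζ^5) = ζ - 1 := by linear_combination ((1) + (-1)*ζ) * e3
        have hE1 : (ζ - 1) * ((ζ - 1) ^ 2 * (d * ((-1)*ζ^3 + (1)*ζ^4 + (-1)*ζ^5))) = 1 := by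
          apply mul_left_cancel₀ hπ0
          linear_combination (-((-1)*ζ^3 + (1)*ζ^4 + (-1)*ζ^5)) * hd + hu1
        exact IsUnit.of_mul_eq_one _ hE1
      · exfalso; apply hπu
        have hJ : (ζ ^ 3 - 1) ^ 2 = -3 * ζ ^ 3 := by
          linear_combination ((1)) * e3
        have hE1 : (ζ - 1) * (-((ζ - 1) * (d ^ 2 * (ζ ^ 6 * ((-2)*ζ + (5)*ζ^2 + (-7)*ζ^3 + (5)*ζ^4 + (-2)*ζ^5))))) = 1 := by
          apply mul_left_cancel₀ (pow_ne_zero 6 hπ0)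
          linear_combination (ζ ^ 6 * ((-2)*ζ + (5)*ζ^2 + (-7)*ζ^3 + (5)*ζ^4 + (-2)*ζ^5) * ((ζ - 1) ^ 4 * d + ζ ^ 3 - 1)) * hd - (ζ ^ 6 * ((-2)*ζ + (5)*ζ^2 + (-7)*ζ^3 + (5)*ζ^4 + (-2)*ζ^5)) * hJ + (3 * (ζ ^ 3 - 1) * ((-2)*ζ + (5)*ζ^2 + (-7)*ζ^3 + (5)*ζ^4 + (-2)*ζ^5)) * e3 - hw6
        exact IsUnit.of_mul_eq_one _ hE1
      · exfalso; apply hπu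
        have hu1 : (ζ ^ 4 - 1) * ((-1)*ζ + (-1)*ζ^5) = ζ - 1 := by linear_combination ((1) + (-1)*ζ^3) * e3
        have hE1 : (ζ - 1) * ((ζ - 1) ^ 2 * (d * ((-1)*ζ + (-1)*ζ^5))) = 1 := by
          apply mul_left_cancel₀ hπ0
          linear_combination (-((-1)*ζ + (-1)*ζ^5)) * hd + hu1
        exact IsUnit.of_mul_eq_one _ hE1
      · exfalso; apply hπu
        have hu1 : (ζ ^ 5 - 1) * ((1) + (1)*ζ^5) = ζ - 1 := by linear_combination ((-1)*ζ + (1)*ζ^4) * e3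
        have hE1 : (ζ - 1) * ((ζ - 1) ^ 2 * (d * ((1) + (1)*ζ^5))) = 1 := by
          apply mul_left_cancel₀ hπ0
          linear_combination (-((1) + (1)*ζ^5)) * hd + hu1
        exact IsUnit.of_mul_eq_one _ hE1
      · exfalso; apply hπu
        have hJ : (ζ ^ 6 - 1) ^ 2 = -3 * ζ ^ 6 := by
          linear_combination ((1) + (-1)*ζ^3 + (1)*ζ^6) * e3
        have hE1 : (ζ - 1) * (-((ζ - 1) * (d ^ 2 * (ζ ^ 3 * ((-2)*ζ + (5)*ζ^2 + (-7)*ζ^3 + (5)*ζ^4 + (-2)*ζ^5))))) = 1 := by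
          apply mul_left_cancel₀ (pow_ne_zero 6 hπ0)
          linear_combination (ζ ^ 3 * ((-2)*ζ + (5)*ζ^2 + (-7)*ζ^3 + (5)*ζ^4 + (-2)*ζ^5) * ((ζ - 1) ^ 4 * d + ζ ^ 6 - 1)) * hd - (ζ ^ 3 * ((-2)*ζ + (5)*ζ^2 + (-7)*ζ^3 + (5)*ζ^4 + (-2)*ζ^5)) * hJ + (3 * (ζ ^ 3 - 1) * ((-2)*ζ + (5)*ζ^2 + (-7)*ζ^3 + (5)*ζ^4 + (-2)*ζ^5)) * e3 - hw6
        exact IsUnit.of_mul_eq_one _ hE1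
      · exfalso; apply hπu
        have hu1 : (ζ ^ 7 - 1) * ((1) + (-1)*ζ + (1)*ζ^3 + (-1)*ζ^4 + (1)*ζ^5) = ζ - 1 := by linear_combination ((-1)*ζ^3 + (1)*ζ^4 + (-1)*ζ^5 + (1)*ζ^6) * e3
        have hE1 : (ζ - 1) * ((ζ - 1) ^ 2 * (d * ((1) + (-1)*ζ + (1)*ζ^3 + (-1)*ζ^4 + (1)*ζ^5))) = 1 := by
          apply mul_left_cancel₀ hπ0
          linear_combination (-((1) + (-1)*ζ + (1)*ζ^3 + (-1)*ζ^4 + (1)*ζ^5)) * hd + hu1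
        exact IsUnit.of_mul_eq_one _ hE1
      · exfalso; apply hπu
        have hu1 : (ζ ^ 8 - 1) * ((-1)*ζ) = ζ - 1 := by linear_combination ((1) + (-1)*ζ^3) * e3
        have hE1 : (ζ - 1) * ((ζ - 1) ^ 2 * (d * ((-1)*ζ))) = 1 := by
          apply mul_left_cancel₀ hπ0
          linear_combination (-((-1)*ζ)) * hd + hu1
        exact IsUnit.of_mul_eq_one _ hE1
    · have hsgn : ((-1 : (𝓞 K)ˣ)) ^ a = -1 := by
        obtain ⟨k, hk⟩ := ha
        rw [hk, zpow_add, zpow_one, zpow_mul, show ((2 : ℤ)) = ((2 : ℕ) : ℤ) from rfl,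
          zpow_natCast, neg_one_sq, one_zpow, one_mul]
      rw [hsgn] at hNP
      have hval : ((N (ε₀ ^ a * ε₁ ^ b * ε₂ ^ c) : (𝓞 K)ˣ) : 𝓞 K) = -ζ ^ r := by
        rw [hNP, Units.val_mul, Units.val_neg, Units.val_one, Units.val_pow_eq_pow_val,
          neg_one_mul]
      rw [hval] at hNm
      obtain ⟨d, hd⟩ := hπ4m.trans hNm
      interval_cases r
      · exfalso; apply hπu
        have hE1 : (ζ - 1) * ((ζ - 1) ^ 5 * ((10) + (11)*ζ + (7)*ζ^2 + (10)*ζ^3 + (4)*ζ^4 + (-4)*ζ^5) + (ζ - 1) ^ 3 * d) = 1 := by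
          linear_combination ((10) + (11)*ζ + (7)*ζ^2 + (10)*ζ^3 + (4)*ζ^4 + (-4)*ζ^5) * hw6 + 3 * hw6i - hd
        exact IsUnit.of_mul_eq_one _ hE1
      · exfalso; apply hπu
        have hs : (ζ ^ 1 + 1) * ((-1)*ζ^3 + (1)*ζ^4 + (-1)*ζ^5) = 1 := by
          linear_combination ((-1)) * e3
        have hE1 : (ζ - 1) * (-((ζ - 1) ^ 3 * (d * ((-1)*ζ^3 + (1)*ζ^4 + (-1)*ζ^5)))) = 1 := by
          linear_combination ((-1)*ζ^3 + (1)*ζ^4 + (-1)*ζ^5) * hd + hs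
        exact IsUnit.of_mul_eq_one _ hE1
      · exfalso; apply hπu
        have hs : (ζ ^ 2 + 1) * ((1) + (-1)*ζ + (-1)*ζ^2 + (1)*ζ^3 + (-1)*ζ^5) = 1 := by
          linear_combination ((-1)*ζ) * e3
        have hE1 : (ζ - 1) * (-((ζ - 1) ^ 3 * (d * ((1) + (-1)*ζ + (-1)*ζ^2 + (1)*ζ^3 + (-1)*ζ^5)))) = 1 := by
          linear_combination ((1) + (-1)*ζ + (-1)*ζ^2 + (1)*ζ^3 + (-1)*ζ^5) * hd + hs
        exact IsUnit.of_mul_eq_one _ hE1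
      · exfalso; apply hπu
        have hs : (ζ ^ 3 + 1) * ((-1)*ζ^3) = 1 := by
          linear_combination ((-1)) * e3
        have hE1 : (ζ - 1) * (-((ζ - 1) ^ 3 * (d * ((-1)*ζ^3)))) = 1 := by
          linear_combination ((-1)*ζ^3) * hd + hs
        exact IsUnit.of_mul_eq_one _ hE1
      · exfalso; apply hπu
        have hs : (ζ ^ 4 + 1) * ((-1)*ζ + (-1)*ζ^2 + (-1)*ζ^3 + (-1)*ζ^4) = 1 := by
          linear_combination ((-1) + (-1)*ζ + (-1)*ζ^2) * e3
        have hE1 : (ζ - 1) * (-((ζ - 1) ^ 3 * (d * ((-1)*ζ + (-1)*ζ^2 + (-1)*ζ^3 + (-1)*ζ^4)))) = 1 := by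
          linear_combination ((-1)*ζ + (-1)*ζ^2 + (-1)*ζ^3 + (-1)*ζ^4) * hd + hs
        exact IsUnit.of_mul_eq_one _ hE1
      · exfalso; apply hπu
        have hs : (ζ ^ 5 + 1) * ((1) + (1)*ζ + (1)*ζ^2 + (1)*ζ^3 + (1)*ζ^4) = 1 := by
          linear_combination ((1)*ζ + (1)*ζ^2 + (1)*ζ^3) * e3
        have hE1 : (ζ - 1) * (-((ζ - 1) ^ 3 * (d * ((1) + (1)*ζ + (1)*ζ^2 + (1)*ζ^3 + (1)*ζ^4)))) = 1 := by
          linear_combination ((1) + (1)*ζ + (1)*ζ^2 + (1)*ζ^3 + (1)*ζ^4) * hd + hs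
        exact IsUnit.of_mul_eq_one _ hE1
      · exfalso; apply hπu
        have hs : (ζ ^ 6 + 1) * ((1) + (1)*ζ^3) = 1 := by
          linear_combination ((1)*ζ^3) * e3
        have hE1 : (ζ - 1) * (-((ζ - 1) ^ 3 * (d * ((1) + (1)*ζ^3)))) = 1 := by
          linear_combination ((1) + (1)*ζ^3) * hd + hs
        exact IsUnit.of_mul_eq_one _ hE1
      · exfalso; apply hπu
        have hs : (ζ ^ 7 + 1) * ((1)*ζ + (1)*ζ^2 + (-1)*ζ^3 + (1)*ζ^5) = 1 := by
          linear_combination ((-1) + (1)*ζ + (1)*ζ^2 + (-1)*ζ^4 + (1)*ζ^6) * e3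
        have hE1 : (ζ - 1) * (-((ζ - 1) ^ 3 * (d * ((1)*ζ + (1)*ζ^2 + (-1)*ζ^3 + (1)*ζ^5)))) = 1 := by
          linear_combination ((1)*ζ + (1)*ζ^2 + (-1)*ζ^3 + (1)*ζ^5) * hd + hs
        exact IsUnit.of_mul_eq_one _ hE1
      · exfalso; apply hπu
        have hs : (ζ ^ 8 + 1) * ((1) + (1)*ζ^3 + (-1)*ζ^4 + (1)*ζ^5) = 1 := by
          linear_combination ((1)*ζ^3 + (-1)*ζ^4 + (1)*ζ^5 + (-1)*ζ^6 + (1)*ζ^7) * e3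
        have hE1 : (ζ - 1) * (-((ζ - 1) ^ 3 * (d * ((1) + (1)*ζ^3 + (-1)*ζ^4 + (1)*ζ^5)))) = 1 := by
          linear_combination ((1) + (1)*ζ^3 + (-1)*ζ^4 + (1)*ζ^5) * hd + hs
        exact IsUnit.of_mul_eq_one _ hE1
  have hfin : σ₁ (algebraMap (𝓞 K) K ((ε₀ ^ a * ε₁ ^ b * ε₂ ^ c : (𝓞 K)ˣ) : 𝓞 K))
      * σ₅ (algebraMap (𝓞 K) K ((ε₀ ^ a * ε₁ ^ b * ε₂ ^ c : (𝓞 K)ˣ) : 𝓞 K))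
      * σ₇ (algebraMap (𝓞 K) K ((ε₀ ^ a * ε₁ ^ b * ε₂ ^ c : (𝓞 K)ˣ) : 𝓞 K)) = 1 := by
    rw [← hcoe₁, ← hcoe₅, ← hcoe₇, ← map_mul, ← map_mul, ← hNval, key, Units.val_one, map_one]
  exact hfin
end

section
/- Let μ be the Haar probability measure on the 3-torus U(1)³, and for u = (u₁,u₂,u₃) ∈ U(1)³ write αᵢ = uᵢ + ūᵢ = 2 Re uᵢ. Define M(k) = binom(k, k/2) if k is even and M(k) = 0 if k is odd. Then for every natural number n, ∫_{U(1)³} (3 + α₁α₂ + α₂α₃ + α₁α₃)ⁿ dμ = Σ_{a+b+c+d=n} (n! / (a! b! c! d!)) · 3^a · M(b+d) · M(b+c) · M(c+d). In particular the values for n = 0,…,4 are 1, 3, 21, 183, 1845. -/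
open MeasureTheory

noncomputable instance : MeasurableSpace Circle := borel Circle
instance : BorelSpace Circle := ⟨rfl⟩

noncomputable def haarC : Measure Circle := Measure.haarMeasure ⊤

instance : IsProbabilityMeasure haarC :=
  ⟨by rw [haarC, ← TopologicalSpace.PositiveCompacts.coe_top (α := Circle),
      Measure.haarMeasure_self]⟩

instance : haarC.IsHaarMeasure := by unfold haarC; infer_instance

lemma integrableC {f : Circle → ℝ} (hf : Continuous f) : Integrable f haarC :=
  hf.integrable_of_hasCompactSupport (HasCompactSupport.of_compactSpace f)

lemma moment_zpow (m : ℤ) :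
    ∫ u : Circle, (u : ℂ) ^ m ∂haarC = if m = 0 then 1 else 0 := by
  split_ifs with h
  · subst h; simp
  · set I := ∫ u : Circle, (u : ℂ) ^ m ∂haarC with hI
    have key : ∀ g : Circle, ((g : ℂ) ^ m) * I = I := by
      intro g
      rw [hI, ← integral_const_mul]
      calc ∫ u : Circle, (g : ℂ) ^ m * (u : ℂ) ^ m ∂haarC
          = ∫ u : Circle, ((g * u : Circle) : ℂ) ^ m ∂haarC := by
            congr 1; ext u; rw [Circle.coe_mul, mul_zpow]
        _ = ∫ u : Circle, (u : ℂ) ^ m ∂haarC :=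
            integral_mul_left_eq_self (fun u : Circle => (u : ℂ) ^ m) g
    have hg : ((Circle.exp (Real.pi / m) : Circle) : ℂ) ^ m = -1 := by
      rw [Circle.coe_exp, ← Complex.exp_int_mul]
      have hm : (m : ℂ) ≠ 0 := Int.cast_ne_zero.2 h
      have : (m : ℂ) * ((Real.pi / m : ℝ) * Complex.I) = Real.pi * Complex.I := by
        push_cast; field_simp
      rw [this, Complex.exp_pi_mul_I]
    have h2 := key (Circle.exp (Real.pi / m))
    rw [hg] at h2
    linear_combination (-(1 : ℂ) / 2) * h2

lemma moment_re (k : ℕ) :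
    ∫ u : Circle, (2 * ((u : ℂ).re)) ^ k ∂haarC
      = if Even k then (k.choose (k / 2) : ℝ) else 0 := by
  have hC : ∫ u : Circle, ((2 * ((u : ℂ).re) : ℝ) : ℂ) ^ k ∂haarC
      = if Even k then ((k.choose (k / 2) : ℝ) : ℂ) else 0 := by
    have step1 : ∀ u : Circle, ((2 * ((u : ℂ).re) : ℝ) : ℂ) ^ k
        = ∑ j ∈ Finset.range (k + 1),
            (u : ℂ) ^ ((j : ℤ) - ((k : ℤ) - j)) * (k.choose j : ℂ) := by
      intro u
      have h2re : ((2 * ((u : ℂ).re) : ℝ) : ℂ) = (u : ℂ) + ((u : ℂ))⁻¹ := by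
        have := Circle.coe_inv_eq_conj u
        rw [Circle.coe_inv] at this
        rw [this, Complex.add_conj]
      rw [h2re, add_pow]
      refine Finset.sum_congr rfl fun j hj => ?_
      simp only [Finset.mem_range] at hj
      have hj' : j ≤ k := by omega
      have hu : (u : ℂ) ≠ 0 := Circle.coe_ne_zero u
      rw [inv_pow, ← zpow_natCast (u : ℂ) j, ← zpow_natCast (u : ℂ) (k - j), ← zpow_neg,
        ← zpow_add₀ hu]
      congr 2
      push_cast [Nat.cast_sub hj']
      try ring
    simp_rw [step1]
    rw [integral_finset_sum]
    · have : ∀ j ∈ Finset.range (k + 1),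
          ∫ u : Circle, (u : ℂ) ^ ((j : ℤ) - ((k : ℤ) - j)) * (k.choose j : ℂ) ∂haarC
            = (if (j : ℤ) - ((k : ℤ) - j) = 0 then 1 else 0) * (k.choose j : ℂ) := by
        intro j _
        rw [integral_mul_const, moment_zpow]
      rw [Finset.sum_congr rfl this]
      rcases Nat.even_or_odd k with he | ho
      · rw [if_pos he]
        obtain ⟨t, ht⟩ := he
        have htk : k / 2 = t := by omega
        rw [Finset.sum_eq_single (k / 2)]
        · rw [if_pos (by omega), one_mul]; norm_cast
        · intro j hj hne
          simp only [Finset.mem_range] at hj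
          rw [if_neg (by omega), zero_mul]
        · intro hmem
          exact absurd (Finset.mem_range.2 (by omega)) hmem
      · rw [if_neg (by simpa using ho)]
        refine Finset.sum_eq_zero fun j hj => ?_
        simp only [Finset.mem_range] at hj
        rw [if_neg, zero_mul]
        rcases ho with ⟨t, ht⟩
        omega
    · intro j _
      apply Integrable.mul_const
      apply Continuous.integrable_of_hasCompactSupport
      · exact (continuous_induced_dom.zpow₀ _ fun u => Or.inl (Circle.coe_ne_zero u))
      · exact HasCompactSupport.of_compactSpace _
  simp_rw [← Complex.ofReal_pow] at hC
  have hcast := integral_ofReal (𝕜 := ℂ) (f := fun u : Circle => (2 * ((u : ℂ).re)) ^ k)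
    (μ := haarC)
  have hC2 : ((∫ u : Circle, (2 * ((u : ℂ).re)) ^ k ∂haarC : ℝ) : ℂ)
      = if Even k then ((k.choose (k / 2) : ℝ) : ℂ) else 0 := hcast.symm.trans hC
  split_ifs with h
  · rw [if_pos h] at hC2; exact_mod_cast hC2
  · rw [if_neg h] at hC2; exact_mod_cast hC2


lemma coeff_nat (n a b c : ℕ) (h1 : a ≤ n) (h2 : b ≤ n - a) (h3 : c ≤ n - a - b) :
    n.choose a * ((n - a).choose b * ((n - a - b).choose c
      * (a.factorial * b.factorial * c.factorial * (n - a - b - c).factorial)))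
      = n.factorial := by
  have e1 := Nat.choose_mul_factorial_mul_factorial h1
  have e2 := Nat.choose_mul_factorial_mul_factorial h2
  have e3 := Nat.choose_mul_factorial_mul_factorial h3
  rw [← e1, ← e2, ← e3]; ring

lemma coeffR (n a b c : ℕ) (h1 : a ≤ n) (h2 : b ≤ n - a) (h3 : c ≤ n - a - b) :
    (n.factorial : ℝ) / ((a.factorial : ℝ) * b.factorial * c.factorial
        * (n - a - b - c).factorial)
      = (n.choose a : ℝ) * ((n - a).choose b) * ((n - a - b).choose c) := by
  rw [div_eq_iff]
  · rw [← coeff_nat n a b c h1 h2 h3]; push_cast; ring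
  · positivity

lemma expand (n : ℕ) (w x y z : ℝ) :
    (w + x + y + z) ^ n
      = ∑ a ∈ Finset.range (n + 1), ∑ b ∈ Finset.range (n + 1),
          ∑ c ∈ Finset.range (n + 1), ∑ d ∈ Finset.range (n + 1),
          if a + b + c + d = n then
            (n.factorial : ℝ)
                / ((a.factorial : ℝ) * b.factorial * c.factorial * d.factorial)
              * w ^ a * x ^ b * y ^ c * z ^ d
          else 0 := by
  -- collapse the d-sum
  have hd : ∀ a b c : ℕ,
      (∑ d ∈ Finset.range (n + 1), if a + b + c + d = n then
          (n.factorial : ℝ)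
              / ((a.factorial : ℝ) * b.factorial * c.factorial * d.factorial)
            * w ^ a * x ^ b * y ^ c * z ^ d
        else 0)
      = if a + b + c ≤ n then
          (n.factorial : ℝ)
              / ((a.factorial : ℝ) * b.factorial * c.factorial * (n - a - b - c).factorial)
            * w ^ a * x ^ b * y ^ c * z ^ (n - a - b - c)
        else 0 := by
    intro a b c
    rcases le_or_gt (a + b + c) n with h | h
    · rw [if_pos h, Finset.sum_eq_single (n - a - b - c)]
      · rw [if_pos (by omega)]
      · intro d _ hne; rw [if_neg (by omega)]
      · intro hmem; exact absurd (Finset.mem_range.2 (by omega)) hmem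
    · rw [if_neg (by omega)]
      exact Finset.sum_eq_zero fun d _ => by rw [if_neg (by omega)]
  simp_rw [hd]
  -- collapse the c-sum range
  have hc : ∀ a b : ℕ,
      (∑ c ∈ Finset.range (n + 1), if a + b + c ≤ n then
          (n.factorial : ℝ)
              / ((a.factorial : ℝ) * b.factorial * c.factorial * (n - a - b - c).factorial)
            * w ^ a * x ^ b * y ^ c * z ^ (n - a - b - c)
        else 0)
      = ∑ c ∈ Finset.range (n - a - b + 1), if a + b + c ≤ n then
          (n.factorial : ℝ)
              / ((a.factorial : ℝ) * b.factorial * c.factorial * (n - a - b - c).factorial)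
            * w ^ a * x ^ b * y ^ c * z ^ (n - a - b - c)
        else 0 := by
    intro a b
    refine (Finset.sum_subset (Finset.range_subset_range.2 (by omega)) ?_).symm
    intro c _ hc
    simp only [Finset.mem_range] at hc
    rw [if_neg (by omega)]
  simp_rw [hc]
  have hb : ∀ a : ℕ,
      (∑ b ∈ Finset.range (n + 1), ∑ c ∈ Finset.range (n - a - b + 1), if a + b + c ≤ n then
          (n.factorial : ℝ)
              / ((a.factorial : ℝ) * b.factorial * c.factorial * (n - a - b - c).factorial)
            * w ^ a * x ^ b * y ^ c * z ^ (n - a - b - c)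
        else 0)
      = ∑ b ∈ Finset.range (n - a + 1), ∑ c ∈ Finset.range (n - a - b + 1),
          if a + b + c ≤ n then
          (n.factorial : ℝ)
              / ((a.factorial : ℝ) * b.factorial * c.factorial * (n - a - b - c).factorial)
            * w ^ a * x ^ b * y ^ c * z ^ (n - a - b - c)
        else 0 := by
    intro a
    refine (Finset.sum_subset (Finset.range_subset_range.2 (by omega)) ?_).symm
    intro b _ hb
    simp only [Finset.mem_range] at hb
    exact Finset.sum_eq_zero fun c _ => by rw [if_neg (by omega)]
  simp_rw [hb]
  -- now use add_pow three times
  rw [show w + x + y + z = w + (x + (y + z)) by ring, add_pow]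
  refine Finset.sum_congr rfl fun a ha => ?_
  simp only [Finset.mem_range] at ha
  have ha' : a ≤ n := by omega
  rw [add_pow]
  simp only [Finset.mul_sum, Finset.sum_mul]
  refine Finset.sum_congr rfl fun b hb' => ?_
  simp only [Finset.mem_range] at hb'
  have hb'' : b ≤ n - a := by omega
  rw [add_pow]
  simp only [Finset.mul_sum, Finset.sum_mul]
  refine Finset.sum_congr rfl fun c hc' => ?_
  simp only [Finset.mem_range] at hc'
  have hc'' : c ≤ n - a - b := by omega
  rw [if_pos (by omega), coeffR n a b c ha' hb'' hc'']
  ring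


noncomputable def nu : Measure (Circle × Circle × Circle) := haarC.prod (haarC.prod haarC)

instance : IsProbabilityMeasure nu := by unfold nu; infer_instance
instance : nu.IsHaarMeasure := by unfold nu; infer_instance

lemma integrable3 {f : Circle × Circle × Circle → ℝ} (hf : Continuous f) :
    Integrable f nu :=
  hf.integrable_of_hasCompactSupport (HasCompactSupport.of_compactSpace f)

lemma contRe : Continuous fun v : Circle => 2 * (v : ℂ).re :=
  continuous_const.mul (Complex.continuous_re.comp continuous_subtype_val)

lemma main_moment (n : ℕ) :
    ∫ u : Circle × Circle × Circle,
        (3 + (2 * (u.1 : ℂ).re) * (2 * (u.2.1 : ℂ).re)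
          + (2 * (u.2.1 : ℂ).re) * (2 * (u.2.2 : ℂ).re)
          + (2 * (u.1 : ℂ).re) * (2 * (u.2.2 : ℂ).re)) ^ n ∂nu
      = ∑ a ∈ Finset.range (n + 1), ∑ b ∈ Finset.range (n + 1),
          ∑ c ∈ Finset.range (n + 1), ∑ d ∈ Finset.range (n + 1),
          if a + b + c + d = n then
            (n.factorial : ℝ)
                / ((a.factorial : ℝ) * b.factorial * c.factorial * d.factorial)
              * 3 ^ a
              * (if Even (b + d) then ((b + d).choose ((b + d) / 2) : ℝ) else 0)
              * (if Even (b + c) then ((b + c).choose ((b + c) / 2) : ℝ) else 0)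
              * (if Even (c + d) then ((c + d).choose ((c + d) / 2) : ℝ) else 0)
          else 0 := by
  set T : ℕ → ℕ → ℕ → ℕ → (Circle × Circle × Circle) → ℝ := fun a b c d u =>
    if a + b + c + d = n then
      (n.factorial : ℝ)
          / ((a.factorial : ℝ) * b.factorial * c.factorial * d.factorial)
        * 3 ^ a * (2 * (u.1 : ℂ).re) ^ (b + d) * (2 * (u.2.1 : ℂ).re) ^ (b + c)
        * (2 * (u.2.2 : ℂ).re) ^ (c + d)
    else 0 with hT
  have hpt : ∀ u : Circle × Circle × Circle,
      (3 + (2 * (u.1 : ℂ).re) * (2 * (u.2.1 : ℂ).re)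
        + (2 * (u.2.1 : ℂ).re) * (2 * (u.2.2 : ℂ).re)
        + (2 * (u.1 : ℂ).re) * (2 * (u.2.2 : ℂ).re)) ^ n
      = ∑ a ∈ Finset.range (n + 1), ∑ b ∈ Finset.range (n + 1),
          ∑ c ∈ Finset.range (n + 1), ∑ d ∈ Finset.range (n + 1), T a b c d u := by
    intro u
    rw [expand n 3 ((2 * (u.1 : ℂ).re) * (2 * (u.2.1 : ℂ).re))
      ((2 * (u.2.1 : ℂ).re) * (2 * (u.2.2 : ℂ).re))
      ((2 * (u.1 : ℂ).re) * (2 * (u.2.2 : ℂ).re))]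
    refine Finset.sum_congr rfl fun a _ => Finset.sum_congr rfl fun b _ =>
      Finset.sum_congr rfl fun c _ => Finset.sum_congr rfl fun d _ => ?_
    simp only [hT]
    by_cases h : a + b + c + d = n
    · rw [if_pos h, if_pos h]
      obtain ⟨x, hx⟩ : ∃ x, (2 : ℝ) * ((u.1 : Circle) : ℂ).re = x := ⟨_, rfl⟩
      obtain ⟨y, hy⟩ : ∃ y, (2 : ℝ) * ((u.2.1 : Circle) : ℂ).re = y := ⟨_, rfl⟩
      obtain ⟨z, hz⟩ : ∃ z, (2 : ℝ) * ((u.2.2 : Circle) : ℂ).re = z := ⟨_, rfl⟩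
      rw [hx, hy, hz]
      ring
    · rw [if_neg h, if_neg h]
  have hTcont : ∀ a b c d : ℕ, Continuous (T a b c d) := by
    intro a b c d
    simp only [hT]
    by_cases h : a + b + c + d = n
    · simp only [if_pos h]
      exact ((((continuous_const.mul
          ((contRe.comp continuous_fst).pow (b + d))).mul
          ((contRe.comp (continuous_fst.comp continuous_snd)).pow (b + c))).mul
          ((contRe.comp (continuous_snd.comp continuous_snd)).pow (c + d))))
    · simp only [if_neg h]; exact continuous_const
  simp_rw [hpt]
  rw [integral_finset_sum _ fun a _ => integrable3 (continuous_finset_sum _ fun b _ =>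
    continuous_finset_sum _ fun c _ => continuous_finset_sum _ fun d _ => hTcont a b c d)]
  refine Finset.sum_congr rfl fun a _ => ?_
  rw [integral_finset_sum _ fun b _ => integrable3
    (continuous_finset_sum _ fun c _ => continuous_finset_sum _ fun d _ => hTcont a b c d)]
  refine Finset.sum_congr rfl fun b _ => ?_
  rw [integral_finset_sum _ fun c _ => integrable3
    (continuous_finset_sum _ fun d _ => hTcont a b c d)]
  refine Finset.sum_congr rfl fun c _ => ?_
  rw [integral_finset_sum _ fun d _ => integrable3 (hTcont a b c d)]
  refine Finset.sum_congr rfl fun d _ => ?_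
  by_cases h : a + b + c + d = n
  · simp only [hT, if_pos h]
    set C : ℝ := (n.factorial : ℝ)
        / ((a.factorial : ℝ) * b.factorial * c.factorial * d.factorial) * 3 ^ a with hC
    have hshape : (fun u : Circle × Circle × Circle =>
        C * (2 * (u.1 : ℂ).re) ^ (b + d) * (2 * (u.2.1 : ℂ).re) ^ (b + c)
          * (2 * (u.2.2 : ℂ).re) ^ (c + d))
        = fun u : Circle × Circle × Circle =>
          C * ((fun v : Circle => (2 * (v : ℂ).re) ^ (b + d)) u.1
            * (fun w : Circle × Circle =>
                (2 * (w.1 : ℂ).re) ^ (b + c) * (2 * (w.2 : ℂ).re) ^ (c + d)) u.2) := by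
      funext u; ring
    rw [hshape, integral_const_mul, nu]
    rw [integral_prod_mul (μ := haarC) (ν := haarC.prod haarC)
      (f := fun v : Circle => (2 * (v : ℂ).re) ^ (b + d))
      (g := fun w : Circle × Circle =>
        (2 * (w.1 : ℂ).re) ^ (b + c) * (2 * (w.2 : ℂ).re) ^ (c + d))]
    rw [integral_prod_mul (μ := haarC) (ν := haarC)
      (f := fun v : Circle => (2 * (v : ℂ).re) ^ (b + c))
      (g := fun v : Circle => (2 * (v : ℂ).re) ^ (c + d))]
    rw [moment_re, moment_re, moment_re]
    ring
  · simp only [hT, if_neg h]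
    simp

set_option maxHeartbeats 2000000 in
/-- Moments of the second trace `a₂ = 3 + α₁α₂ + α₂α₃ + α₁α₃`
(with `αᵢ = uᵢ + ūᵢ = 2 Re uᵢ`) with respect to the Haar probability measure on
`U(1)³`: `∫ a₂ⁿ dμ = ∑_{a+b+c+d=n} n!/(a!b!c!d!) · 3^a · M(b+d)M(b+c)M(c+d)`,
where `M(k) = C(k, k/2)` for `k` even and `0` for `k` odd; the values for
`n = 0,…,4` are `1, 3, 21, 183, 1845`. -/
theorem second_trace_moments
    [MeasurableSpace (Circle × Circle × Circle)]
    [BorelSpace (Circle × Circle × Circle)]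
    (μ : Measure (Circle × Circle × Circle))
    [μ.IsHaarMeasure] [IsProbabilityMeasure μ] :
    let M : ℕ → ℝ := fun k => if Even k then (k.choose (k / 2) : ℝ) else 0
    let α₁ : Circle × Circle × Circle → ℝ := fun u => 2 * (u.1 : ℂ).re
    let α₂ : Circle × Circle × Circle → ℝ := fun u => 2 * (u.2.1 : ℂ).re
    let α₃ : Circle × Circle × Circle → ℝ := fun u => 2 * (u.2.2 : ℂ).re
    let a₂ : Circle × Circle × Circle → ℝ :=
      fun u => 3 + α₁ u * α₂ u + α₂ u * α₃ u + α₁ u * α₃ u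
    (∀ n : ℕ,
      ∫ u, (a₂ u) ^ n ∂μ
        = ∑ a ∈ Finset.range (n + 1), ∑ b ∈ Finset.range (n + 1),
            ∑ c ∈ Finset.range (n + 1), ∑ d ∈ Finset.range (n + 1),
            if a + b + c + d = n then
              (n.factorial : ℝ)
                  / ((a.factorial : ℝ) * b.factorial * c.factorial * d.factorial)
                * 3 ^ a * M (b + d) * M (b + c) * M (c + d)
            else 0) ∧
    (∫ u, (a₂ u) ^ 0 ∂μ) = 1 ∧ (∫ u, (a₂ u) ^ 1 ∂μ) = 3 ∧
    (∫ u, (a₂ u) ^ 2 ∂μ) = 21 ∧ (∫ u, (a₂ u) ^ 3 ∂μ) = 183 ∧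
    (∫ u, (a₂ u) ^ 4 ∂μ) = 1845 := by
  intro M α₁ α₂ α₃ a₂
  have hms : ‹MeasurableSpace (Circle × Circle × Circle)› = Prod.instMeasurableSpace := by
    have h1 := BorelSpace.measurable_eq (α := Circle × Circle × Circle)
    have h2 := @BorelSpace.measurable_eq (Circle × Circle × Circle) _
      Prod.instMeasurableSpace Prod.borelSpace
    exact h1.trans h2.symm
  subst hms
  have hμ : μ = nu := Measure.isHaarMeasure_eq_of_isProbabilityMeasure μ nu
  subst hμ
  have key : ∀ n : ℕ,
      ∫ u, (a₂ u) ^ n ∂nu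
        = ∑ a ∈ Finset.range (n + 1), ∑ b ∈ Finset.range (n + 1),
            ∑ c ∈ Finset.range (n + 1), ∑ d ∈ Finset.range (n + 1),
            if a + b + c + d = n then
              (n.factorial : ℝ)
                  / ((a.factorial : ℝ) * b.factorial * c.factorial * d.factorial)
                * 3 ^ a * M (b + d) * M (b + c) * M (c + d)
            else 0 := fun n => main_moment n
  have hM : ∀ k, M k = if Even k then (k.choose (k / 2) : ℝ) else 0 := fun _ => rfl
  refine ⟨key, ?_, ?_, ?_, ?_, ?_⟩ <;>
    rw [key] <;>
    simp only [hM, Finset.sum_range_succ, Finset.sum_range_zero] <;>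
    norm_num [Nat.factorial, Nat.even_iff, Nat.choose]
end

section
/- Let μ be the Haar probability measure on the 3-torus U(1)³, and for u = (u₁,u₂,u₃) ∈ U(1)³ write αᵢ = uᵢ + ūᵢ = 2 Re uᵢ. Define M(k) = binom(k, k/2) if k is even and M(k) = 0 if k is odd. Then for every natural number n, ∫_{U(1)³} (2α₁ + 2α₂ + 2α₃ + α₁α₂α₃)ⁿ dμ = Σ_{a+b+c+d=n} (n! / (a! b! c! d!)) · 2^{a+b+c} · M(a+d) · M(b+d) · M(c+d). In particular the values for n = 0,…,6 are 1, 0, 32, 0, 4920, 0, 1109120. -/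
open MeasureTheory Finset

/-! ### Auxiliary definitions -/

noncomputable section ThirdTraceAux

/-- characters of the 3-torus -/
def tchar (j k l : ℤ) (u : Circle × Circle × Circle) : ℂ :=
  ((u.1 ^ j : Circle) : ℂ) * ((u.2.1 ^ k : Circle) : ℂ) * ((u.2.2 ^ l : Circle) : ℂ)

def Mc : ℕ → ℂ := fun k => if Even k then (k.choose (k / 2) : ℂ) else 0

def Mr : ℕ → ℝ := fun k => if Even k then (k.choose (k / 2) : ℝ) else 0

def mN : ℕ → ℕ := fun k => if Even k then k.choose (k / 2) else 0

def Nn : ℕ → ℕ := fun n =>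
  ∑ a ∈ range (n+1), ∑ b ∈ range (n-a+1), ∑ c ∈ range (n-a-b+1),
    n.choose a * ((n-a).choose b) * ((n-a-b).choose c) * 2^(a+b+c)
      * (mN (a+(n-a-b-c)) * mN (b+(n-a-b-c)) * mN (c+(n-a-b-c)))

lemma Mr_cast (k : ℕ) : ((Mr k : ℝ) : ℂ) = Mc k := by
  unfold Mr Mc
  split_ifs <;> simp

lemma mN_cast (k : ℕ) : ((mN k : ℕ) : ℝ) = Mr k := by
  unfold mN Mr
  split_ifs <;> simp

lemma circle_coe_cont : Continuous fun z : Circle => (z : ℂ) := continuous_induced_dom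

lemma cont_tchar (j k l : ℤ) : Continuous (tchar j k l) := by
  unfold tchar
  exact ((circle_coe_cont.comp ((continuous_zpow (G := Circle) j).comp continuous_fst)).mul
    (circle_coe_cont.comp
      ((continuous_zpow (G := Circle) k).comp (continuous_fst.comp continuous_snd)))).mul
    (circle_coe_cont.comp
      ((continuous_zpow (G := Circle) l).comp (continuous_snd.comp continuous_snd)))

lemma tchar_mul (j k l : ℤ) (g u : Circle × Circle × Circle) :
    tchar j k l (g * u) = tchar j k l g * tchar j k l u := by
  simp only [tchar, Prod.fst_mul, Prod.snd_mul, mul_zpow]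
  push_cast
  ring

lemma Circle.coe_zpow' (z : Circle) (n : ℤ) : ((z ^ n : Circle) : ℂ) = (z : ℂ) ^ n := by
  induction n using Int.induction_on with
  | zero => simp
  | succ k ih =>
      have h : (z:ℂ) ^ ((k:ℤ) + 1) = (z:ℂ) ^ (k:ℤ) * z := zpow_add_one₀ z.coe_ne_zero _
      rw [zpow_add_one, h, ← ih]; push_cast; ring
  | pred k ih =>
      have h : (z:ℂ) ^ (-(k:ℤ) - 1) = (z:ℂ) ^ (-(k:ℤ)) * (z:ℂ)⁻¹ := by
        rw [zpow_sub_one₀ z.coe_ne_zero]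
      rw [zpow_sub_one, h, ← ih]; push_cast [Circle.coe_inv]; ring

lemma exp_zpow_neg_one (j : ℤ) (hj : j ≠ 0) :
    ((Circle.exp (Real.pi / j) ^ j : Circle) : ℂ) = -1 := by
  rw [Circle.coe_zpow', Circle.coe_exp, ← Complex.exp_int_mul]
  rw [show (j : ℂ) * (↑(Real.pi / (j:ℝ)) * Complex.I) = Real.pi * Complex.I by
    push_cast
    have : (j : ℂ) ≠ 0 := Int.cast_ne_zero.mpr hj
    field_simp]
  exact Complex.exp_pi_mul_I

lemma expand_A (z : Circle) (p : ℕ) :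
    ((z:ℂ) + (z:ℂ)⁻¹) ^ p
      = ∑ i ∈ range (p+1), (p.choose i : ℂ) * ((z ^ (2*(i:ℤ) - p) : Circle) : ℂ) := by
  rw [add_pow]
  refine sum_congr rfl fun i hi => ?_
  have hip : i ≤ p := Nat.lt_succ_iff.mp (mem_range.mp hi)
  have he : 2*(i:ℤ) - p = (i:ℤ) + (-((p - i : ℕ) : ℤ)) := by
    push_cast [hip]; ring
  rw [Circle.coe_zpow', he, zpow_add₀ z.coe_ne_zero, zpow_neg, zpow_natCast, zpow_natCast]
  ring

lemma sum_eval (p : ℕ) :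
    ∑ i ∈ range (p+1), (p.choose i : ℂ) * (if 2*(i:ℤ) - p = 0 then (1:ℂ) else 0) = Mc p := by
  unfold Mc
  by_cases hp : Even p
  · obtain ⟨m, rfl⟩ := hp
    rw [if_pos ⟨m, rfl⟩]
    rw [Finset.sum_eq_single m]
    · rw [if_pos (by push_cast; ring), mul_one, show (m+m)/2 = m by omega]
    · intro i _ hi
      rw [if_neg (by omega), mul_zero]
    · intro h
      exact absurd (mem_range.mpr (by omega)) h
  · rw [if_neg hp]
    refine Finset.sum_eq_zero fun i _ => ?_
    rw [if_neg (fun h => hp ⟨i, by omega⟩), mul_zero]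

lemma triple_sum_mul {s t v : Finset ℕ} (f g h : ℕ → ℂ) :
    (∑ i ∈ s, f i) * (∑ j ∈ t, g j) * (∑ k ∈ v, h k)
      = ∑ i ∈ s, ∑ j ∈ t, ∑ k ∈ v, f i * g j * h k := by
  rw [Finset.sum_mul_sum, Finset.sum_mul]
  refine sum_congr rfl fun i _ => ?_
  rw [Finset.sum_mul]
  refine sum_congr rfl fun j _ => ?_
  rw [Finset.mul_sum]

lemma contA1 : Continuous fun u : Circle × Circle × Circle => (u.1:ℂ) + (u.1:ℂ)⁻¹ :=
  (circle_coe_cont.comp continuous_fst).add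
    (circle_coe_cont.comp ((continuous_inv (G := Circle)).comp continuous_fst))

lemma contA2 : Continuous fun u : Circle × Circle × Circle => (u.2.1:ℂ) + (u.2.1:ℂ)⁻¹ :=
  (circle_coe_cont.comp (continuous_fst.comp continuous_snd)).add
    (circle_coe_cont.comp
      ((continuous_inv (G := Circle)).comp (continuous_fst.comp continuous_snd)))

lemma contA3 : Continuous fun u : Circle × Circle × Circle => (u.2.2:ℂ) + (u.2.2:ℂ)⁻¹ :=
  (circle_coe_cont.comp (continuous_snd.comp continuous_snd)).add
    (circle_coe_cont.comp
      ((continuous_inv (G := Circle)).comp (continuous_snd.comp continuous_snd)))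

/-! ### Combinatorial identities -/

lemma sum_if_d (n m : ℕ) (f : ℕ → ℝ) :
    ∑ d ∈ range (n+1), (if m + d = n then f d else 0)
      = if m ≤ n then f (n - m) else 0 := by
  by_cases h : m ≤ n
  · rw [if_pos h, Finset.sum_eq_single (n - m)]
    · rw [if_pos (by omega)]
    · intro d _ hd; rw [if_neg (by omega)]
    · intro habs; exact absurd (mem_range.mpr (by omega)) habs
  · rw [if_neg h]
    exact Finset.sum_eq_zero fun d _ => if_neg (by omega)

lemma sum_if_trunc (N m : ℕ) (g : ℕ → ℝ) :
    ∑ c ∈ range (N+1), (if m + c ≤ N then g c else 0)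
      = if m ≤ N then ∑ c ∈ range (N-m+1), g c else 0 := by
  by_cases h : m ≤ N
  · rw [if_pos h, ← Finset.sum_filter,
      show filter (fun c => m + c ≤ N) (range (N+1)) = range (N-m+1) by
        ext c; simp only [mem_filter, mem_range]; omega]
  · rw [if_neg h]
    exact Finset.sum_eq_zero fun c _ => if_neg (by omega)

lemma coef_eq (a b c n : ℕ) (h : a + b + c ≤ n) :
    (n.factorial : ℝ)
        / ((a.factorial : ℝ) * b.factorial * c.factorial * (n-a-b-c).factorial)
      = (n.choose a : ℝ) * ((n-a).choose b : ℝ) * ((n-a-b).choose c : ℝ) := by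
  have key : n.choose a * a.factorial
      * ((n-a).choose b * b.factorial * ((n-a-b).choose c * c.factorial
        * (n-a-b-c).factorial)) = n.factorial := by
    calc n.choose a * a.factorial * ((n-a).choose b * b.factorial
          * ((n-a-b).choose c * c.factorial * (n-a-b-c).factorial))
        = n.choose a * a.factorial * ((n-a).choose b * b.factorial * (n-a-b).factorial) := by
          rw [Nat.choose_mul_factorial_mul_factorial (show c ≤ n-a-b by omega)]
      _ = n.choose a * a.factorial * (n-a).factorial := by
          rw [Nat.choose_mul_factorial_mul_factorial (show b ≤ n-a by omega)]
      _ = n.factorial := by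
          rw [Nat.choose_mul_factorial_mul_factorial (show a ≤ n by omega)]
  rw [div_eq_iff (by positivity), ← key]
  push_cast
  ring

lemma rhs_eq (n : ℕ) :
    (∑ a ∈ range (n+1), ∑ b ∈ range (n+1), ∑ c ∈ range (n+1), ∑ d ∈ range (n+1),
        if a + b + c + d = n then
          (n.factorial : ℝ)
              / ((a.factorial : ℝ) * b.factorial * c.factorial * d.factorial)
            * 2 ^ (a+b+c) * Mr (a+d) * Mr (b+d) * Mr (c+d)
        else 0)
      = ∑ a ∈ range (n+1), ∑ b ∈ range (n-a+1), ∑ c ∈ range (n-a-b+1),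
          ((n.choose a : ℝ) * ((n-a).choose b : ℝ) * ((n-a-b).choose c : ℝ)) * 2^(a+b+c)
            * (Mr (a+(n-a-b-c)) * Mr (b+(n-a-b-c)) * Mr (c+(n-a-b-c))) := by
  refine sum_congr rfl fun a ha => ?_
  have ha' : a ≤ n := Nat.lt_succ_iff.mp (mem_range.mp ha)
  calc ∑ b ∈ range (n+1), ∑ c ∈ range (n+1), ∑ d ∈ range (n+1),
        (if a + b + c + d = n then
          (n.factorial : ℝ)
              / ((a.factorial : ℝ) * b.factorial * c.factorial * d.factorial)
            * 2 ^ (a+b+c) * Mr (a+d) * Mr (b+d) * Mr (c+d)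
        else 0)
      = ∑ b ∈ range (n+1), (if a + b ≤ n then ∑ c ∈ range (n-a-b+1),
          ((n.choose a : ℝ) * ((n-a).choose b : ℝ) * ((n-a-b).choose c : ℝ)) * 2^(a+b+c)
            * (Mr (a+(n-a-b-c)) * Mr (b+(n-a-b-c)) * Mr (c+(n-a-b-c))) else 0) := by
        refine sum_congr rfl fun b _ => ?_
        rw [show n - a - b = n - (a+b) by omega, ← sum_if_trunc n (a+b)
          (fun c => ((n.choose a : ℝ) * ((n-a).choose b : ℝ) * ((n-(a+b)).choose c : ℝ))
            * 2^(a+b+c)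
            * (Mr (a+(n-(a+b)-c)) * Mr (b+(n-(a+b)-c)) * Mr (c+(n-(a+b)-c))))]
        refine sum_congr rfl fun c _ => ?_
        rw [show (fun d => if a + b + c + d = n then
          (n.factorial : ℝ)
              / ((a.factorial : ℝ) * b.factorial * c.factorial * d.factorial)
            * 2 ^ (a+b+c) * Mr (a+d) * Mr (b+d) * Mr (c+d)
        else 0) = (fun d => if (a+b+c) + d = n then
          ((n.factorial : ℝ)
              / ((a.factorial : ℝ) * b.factorial * c.factorial * d.factorial)
            * 2 ^ (a+b+c) * Mr (a+d) * Mr (b+d) * Mr (c+d)) else 0) from rfl,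
          sum_if_d n (a+b+c)]
        by_cases hle : a + b + c ≤ n
        · rw [if_pos hle, if_pos (by omega), show n - (a+b+c) = n - a - b - c by omega,
            show n - (a+b) = n - a - b by omega, coef_eq a b c n hle]
          ring
        · rw [if_neg hle, if_neg (by omega)]
    _ = ∑ b ∈ range (n-a+1), ∑ c ∈ range (n-a-b+1),
          ((n.choose a : ℝ) * ((n-a).choose b : ℝ) * ((n-a-b).choose c : ℝ)) * 2^(a+b+c)
            * (Mr (a+(n-a-b-c)) * Mr (b+(n-a-b-c)) * Mr (c+(n-a-b-c))) := by
        rw [sum_if_trunc n a, if_pos ha']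

lemma tri_cast (n : ℕ) :
    ∑ a ∈ range (n+1), ∑ b ∈ range (n-a+1), ∑ c ∈ range (n-a-b+1),
        ((n.choose a : ℝ) * ((n-a).choose b : ℝ) * ((n-a-b).choose c : ℝ)) * 2^(a+b+c)
          * (Mr (a+(n-a-b-c)) * Mr (b+(n-a-b-c)) * Mr (c+(n-a-b-c)))
      = ((Nn n : ℕ) : ℝ) := by
  unfold Nn
  push_cast [mN_cast]
  rfl

/-! ### Integral lemmas -/

section Haar

variable [MeasurableSpace (Circle × Circle × Circle)] [BorelSpace (Circle × Circle × Circle)]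
  (μ : Measure (Circle × Circle × Circle)) [μ.IsHaarMeasure] [IsProbabilityMeasure μ]

omit [IsProbabilityMeasure μ] in
lemma integrable_cont (f : Circle × Circle × Circle → ℂ) (hf : Continuous f) : Integrable f μ :=
  hf.integrable_of_hasCompactSupport (HasCompactSupport.of_compactSpace f)

omit [IsProbabilityMeasure μ] in
lemma integral_tchar_eq_zero (j k l : ℤ) (g : Circle × Circle × Circle)
    (hg : tchar j k l g ≠ 1) : ∫ u, tchar j k l u ∂μ = 0 := by
  have key : ∫ u, tchar j k l u ∂μ = tchar j k l g * ∫ u, tchar j k l u ∂μ := by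
    conv_lhs => rw [← integral_mul_left_eq_self (μ := μ) (tchar j k l) g]
    simp_rw [tchar_mul]
    rw [MeasureTheory.integral_const_mul]
  by_contra h
  have := mul_right_cancel₀ h (by rw [← key, one_mul] :
    (1:ℂ) * ∫ u, tchar j k l u ∂μ = tchar j k l g * ∫ u, tchar j k l u ∂μ)
  exact hg this.symm

lemma integral_tchar (j k l : ℤ) :
    ∫ u, tchar j k l u ∂μ = if j = 0 ∧ k = 0 ∧ l = 0 then 1 else 0 := by
  by_cases hj : j = 0
  · by_cases hk : k = 0
    · by_cases hl : l = 0
      · subst hj; subst hk; subst hl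
        simp [tchar, measure_univ]
      · rw [if_neg (by tauto)]
        exact integral_tchar_eq_zero μ j k l (1, 1, Circle.exp (Real.pi / l))
          (by simp [tchar, hj, hk, exp_zpow_neg_one l hl]; norm_num)
    · rw [if_neg (by tauto)]
      exact integral_tchar_eq_zero μ j k l (1, Circle.exp (Real.pi / k), 1)
        (by simp [tchar, hj, exp_zpow_neg_one k hk]; norm_num)
  · rw [if_neg (by tauto)]
    exact integral_tchar_eq_zero μ j k l (Circle.exp (Real.pi / j), 1, 1)
      (by simp [tchar, exp_zpow_neg_one j hj]; norm_num)

lemma integral_monomial (p q r : ℕ) :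
    ∫ u : Circle × Circle × Circle,
        ((u.1:ℂ) + (u.1:ℂ)⁻¹) ^ p * ((u.2.1:ℂ) + (u.2.1:ℂ)⁻¹) ^ q
          * ((u.2.2:ℂ) + (u.2.2:ℂ)⁻¹) ^ r ∂μ
      = Mc p * Mc q * Mc r := by
  have hpt : ∀ u : Circle × Circle × Circle,
      ((u.1:ℂ) + (u.1:ℂ)⁻¹) ^ p * ((u.2.1:ℂ) + (u.2.1:ℂ)⁻¹) ^ q
          * ((u.2.2:ℂ) + (u.2.2:ℂ)⁻¹) ^ r
        = ∑ i ∈ range (p+1), ∑ j ∈ range (q+1), ∑ k ∈ range (r+1),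
            ((p.choose i : ℂ) * q.choose j * r.choose k)
              * tchar (2*(i:ℤ) - p) (2*(j:ℤ) - q) (2*(k:ℤ) - r) u := by
    intro u
    rw [expand_A u.1 p, expand_A u.2.1 q, expand_A u.2.2 r, triple_sum_mul]
    refine sum_congr rfl fun i _ => sum_congr rfl fun j _ => sum_congr rfl fun k _ => ?_
    simp only [tchar]
    ring
  simp only [hpt]
  rw [integral_finset_sum _ (fun i _ => integrable_cont μ _
      (continuous_finset_sum _ (fun j _ => continuous_finset_sum _ (fun k _ =>
        continuous_const.fun_mul (cont_tchar _ _ _)))))]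
  simp_rw [integral_finset_sum _ (fun j _ => integrable_cont μ _
      (continuous_finset_sum _ (fun k _ => continuous_const.fun_mul (cont_tchar _ _ _))))]
  simp_rw [integral_finset_sum _ (fun k _ => integrable_cont μ _
      (continuous_const.fun_mul (cont_tchar _ _ _)))]
  simp_rw [MeasureTheory.integral_const_mul, integral_tchar μ]
  have hif : ∀ (P Q R : Prop) (_ : Decidable P) (_ : Decidable Q) (_ : Decidable R),
      (if P ∧ Q ∧ R then (1:ℂ) else 0)
        = (if P then (1:ℂ) else 0) * (if Q then (1:ℂ) else 0) * (if R then (1:ℂ) else 0) := by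
    intros P Q R _ _ _
    by_cases hP : P <;> by_cases hQ : Q <;> by_cases hR : R <;> simp [hP, hQ, hR]
  calc ∑ i ∈ range (p+1), ∑ j ∈ range (q+1), ∑ k ∈ range (r+1),
        ((p.choose i : ℂ) * q.choose j * r.choose k)
          * (if 2*(i:ℤ) - p = 0 ∧ 2*(j:ℤ) - q = 0 ∧ 2*(k:ℤ) - r = 0 then (1:ℂ) else 0)
      = (∑ i ∈ range (p+1), (p.choose i : ℂ) * (if 2*(i:ℤ) - p = 0 then (1:ℂ) else 0))
        * (∑ j ∈ range (q+1), (q.choose j : ℂ) * (if 2*(j:ℤ) - q = 0 then (1:ℂ) else 0))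
        * (∑ k ∈ range (r+1), (r.choose k : ℂ) * (if 2*(k:ℤ) - r = 0 then (1:ℂ) else 0)) := by
        rw [triple_sum_mul]
        refine sum_congr rfl fun i _ => sum_congr rfl fun j _ => sum_congr rfl fun k _ => ?_
        rw [hif _ _ _ _ _ _]
        ring
    _ = Mc p * Mc q * Mc r := by rw [sum_eval, sum_eval, sum_eval]

lemma integral_pow_complex (n : ℕ) :
    ∫ u : Circle × Circle × Circle,
        (2*((u.1:ℂ) + (u.1:ℂ)⁻¹) + 2*((u.2.1:ℂ) + (u.2.1:ℂ)⁻¹) + 2*((u.2.2:ℂ) + (u.2.2:ℂ)⁻¹)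
          + ((u.1:ℂ) + (u.1:ℂ)⁻¹) * ((u.2.1:ℂ) + (u.2.1:ℂ)⁻¹)
            * ((u.2.2:ℂ) + (u.2.2:ℂ)⁻¹)) ^ n ∂μ
      = ∑ a ∈ range (n+1), ∑ b ∈ range (n-a+1), ∑ c ∈ range (n-a-b+1),
          ((n.choose a : ℂ) * ((n-a).choose b : ℂ) * ((n-a-b).choose c : ℂ)) * 2^(a+b+c)
            * (Mc (a+(n-a-b-c)) * Mc (b+(n-a-b-c)) * Mc (c+(n-a-b-c))) := by
  have hpt : ∀ u : Circle × Circle × Circle,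
      (2*((u.1:ℂ) + (u.1:ℂ)⁻¹) + 2*((u.2.1:ℂ) + (u.2.1:ℂ)⁻¹) + 2*((u.2.2:ℂ) + (u.2.2:ℂ)⁻¹)
          + ((u.1:ℂ) + (u.1:ℂ)⁻¹) * ((u.2.1:ℂ) + (u.2.1:ℂ)⁻¹)
            * ((u.2.2:ℂ) + (u.2.2:ℂ)⁻¹)) ^ n
        = ∑ a ∈ range (n+1), ∑ b ∈ range (n-a+1), ∑ c ∈ range (n-a-b+1),
            ((n.choose a : ℂ) * ((n-a).choose b : ℂ) * ((n-a-b).choose c : ℂ)) * 2^(a+b+c)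
              * (((u.1:ℂ) + (u.1:ℂ)⁻¹) ^ (a+(n-a-b-c))
                  * ((u.2.1:ℂ) + (u.2.1:ℂ)⁻¹) ^ (b+(n-a-b-c))
                  * ((u.2.2:ℂ) + (u.2.2:ℂ)⁻¹) ^ (c+(n-a-b-c))) := by
    intro u
    set x := (u.1:ℂ) + (u.1:ℂ)⁻¹
    set y := (u.2.1:ℂ) + (u.2.1:ℂ)⁻¹
    set z := (u.2.2:ℂ) + (u.2.2:ℂ)⁻¹
    rw [show 2*x + 2*y + 2*z + x*y*z = 2*x + (2*y + (2*z + x*y*z)) by ring, add_pow]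
    refine sum_congr rfl fun a ha => ?_
    rw [add_pow]
    simp only [Finset.mul_sum, Finset.sum_mul]
    refine sum_congr rfl fun b hb => ?_
    rw [add_pow]
    simp only [Finset.mul_sum, Finset.sum_mul]
    refine sum_congr rfl fun c hc => ?_
    simp only [mul_pow]
    ring
  simp only [hpt]
  rw [integral_finset_sum _ (fun a _ => integrable_cont μ _
      (continuous_finset_sum _ (fun b _ => continuous_finset_sum _ (fun c _ =>
        continuous_const.fun_mul (((contA1.fun_pow _).fun_mul (contA2.fun_pow _)).fun_mul (contA3.fun_pow _))))))]
  refine sum_congr rfl fun a _ => ?_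
  rw [integral_finset_sum _ (fun b _ => integrable_cont μ _
      (continuous_finset_sum _ (fun c _ =>
        continuous_const.fun_mul (((contA1.fun_pow _).fun_mul (contA2.fun_pow _)).fun_mul (contA3.fun_pow _)))))]
  refine sum_congr rfl fun b _ => ?_
  rw [integral_finset_sum _ (fun c _ => integrable_cont μ _
      (continuous_const.fun_mul (((contA1.fun_pow _).fun_mul (contA2.fun_pow _)).fun_mul (contA3.fun_pow _))))]
  refine sum_congr rfl fun c _ => ?_
  rw [MeasureTheory.integral_const_mul, integral_monomial μ]

lemma coe_two_re (z : Circle) : ((2 * (z:ℂ).re : ℝ) : ℂ) = (z:ℂ) + (z:ℂ)⁻¹ := by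
  rw [← Circle.coe_inv, Circle.coe_inv_eq_conj, Complex.add_conj]

lemma integral_pow_real (n : ℕ) :
    ∫ u : Circle × Circle × Circle,
        (2 * (2 * (u.1:ℂ).re) + 2 * (2 * (u.2.1:ℂ).re) + 2 * (2 * (u.2.2:ℂ).re)
          + (2 * (u.1:ℂ).re) * (2 * (u.2.1:ℂ).re) * (2 * (u.2.2:ℂ).re)) ^ n ∂μ
      = ((Nn n : ℕ) : ℝ) := by
  have key : ((∫ u : Circle × Circle × Circle,
      (2 * (2 * (u.1:ℂ).re) + 2 * (2 * (u.2.1:ℂ).re) + 2 * (2 * (u.2.2:ℂ).re)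
        + (2 * (u.1:ℂ).re) * (2 * (u.2.1:ℂ).re) * (2 * (u.2.2:ℂ).re)) ^ n ∂μ : ℝ) : ℂ)
      = (((Nn n : ℕ) : ℝ) : ℂ) := by
    rw [show ((∫ u : Circle × Circle × Circle,
        (2 * (2 * (u.1:ℂ).re) + 2 * (2 * (u.2.1:ℂ).re) + 2 * (2 * (u.2.2:ℂ).re)
          + (2 * (u.1:ℂ).re) * (2 * (u.2.1:ℂ).re) * (2 * (u.2.2:ℂ).re)) ^ n ∂μ : ℝ) : ℂ)
      = ∫ u : Circle × Circle × Circle,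
        (((2 * (2 * (u.1:ℂ).re) + 2 * (2 * (u.2.1:ℂ).re) + 2 * (2 * (u.2.2:ℂ).re)
          + (2 * (u.1:ℂ).re) * (2 * (u.2.1:ℂ).re) * (2 * (u.2.2:ℂ).re)) ^ n : ℝ) : ℂ) ∂μ
      from (integral_ofReal (𝕜 := ℂ)).symm]
    have hpt : ∀ u : Circle × Circle × Circle,
        (((2 * (2 * (u.1:ℂ).re) + 2 * (2 * (u.2.1:ℂ).re) + 2 * (2 * (u.2.2:ℂ).re)
          + (2 * (u.1:ℂ).re) * (2 * (u.2.1:ℂ).re) * (2 * (u.2.2:ℂ).re)) ^ n : ℝ) : ℂ)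
        = (2*((u.1:ℂ) + (u.1:ℂ)⁻¹) + 2*((u.2.1:ℂ) + (u.2.1:ℂ)⁻¹) + 2*((u.2.2:ℂ) + (u.2.2:ℂ)⁻¹)
          + ((u.1:ℂ) + (u.1:ℂ)⁻¹) * ((u.2.1:ℂ) + (u.2.1:ℂ)⁻¹)
            * ((u.2.2:ℂ) + (u.2.2:ℂ)⁻¹)) ^ n := by
      intro u
      rw [← coe_two_re, ← coe_two_re, ← coe_two_re]
      push_cast
      ring
    simp only [hpt]
    rw [integral_pow_complex μ n, ← tri_cast n]
    push_cast [Mr_cast]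
    rfl
  exact_mod_cast key

end Haar

end ThirdTraceAux


/-- Moments of the third trace `a₃ = 2α₁ + 2α₂ + 2α₃ + α₁α₂α₃`
(with `αᵢ = uᵢ + ūᵢ = 2 Re uᵢ`) with respect to the Haar probability measure on
`U(1)³`: `∫ a₃ⁿ dμ = ∑_{a+b+c+d=n} n!/(a!b!c!d!) · 2^{a+b+c} · M(a+d)M(b+d)M(c+d)`,
where `M(k) = C(k, k/2)` for `k` even and `0` for `k` odd; the values for
`n = 0,…,6` are `1, 0, 32, 0, 4920, 0, 1109120`. -/
theorem third_trace_moments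
    [MeasurableSpace (Circle × Circle × Circle)]
    [BorelSpace (Circle × Circle × Circle)]
    (μ : Measure (Circle × Circle × Circle))
    [μ.IsHaarMeasure] [IsProbabilityMeasure μ] :
    let M : ℕ → ℝ := fun k => if Even k then (k.choose (k / 2) : ℝ) else 0
    let α₁ : Circle × Circle × Circle → ℝ := fun u => 2 * (u.1 : ℂ).re
    let α₂ : Circle × Circle × Circle → ℝ := fun u => 2 * (u.2.1 : ℂ).re
    let α₃ : Circle × Circle × Circle → ℝ := fun u => 2 * (u.2.2 : ℂ).re
    let a₃ : Circle × Circle × Circle → ℝ :=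
      fun u => 2 * α₁ u + 2 * α₂ u + 2 * α₃ u + α₁ u * α₂ u * α₃ u
    (∀ n : ℕ,
      ∫ u, (a₃ u) ^ n ∂μ
        = ∑ a ∈ Finset.range (n + 1), ∑ b ∈ Finset.range (n + 1),
            ∑ c ∈ Finset.range (n + 1), ∑ d ∈ Finset.range (n + 1),
            if a + b + c + d = n then
              (n.factorial : ℝ)
                  / ((a.factorial : ℝ) * b.factorial * c.factorial * d.factorial)
                * 2 ^ (a + b + c) * M (a + d) * M (b + d) * M (c + d)
            else 0) ∧
    (∫ u, (a₃ u) ^ 0 ∂μ) = 1 ∧ (∫ u, (a₃ u) ^ 1 ∂μ) = 0 ∧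
    (∫ u, (a₃ u) ^ 2 ∂μ) = 32 ∧ (∫ u, (a₃ u) ^ 3 ∂μ) = 0 ∧
    (∫ u, (a₃ u) ^ 4 ∂μ) = 4920 ∧ (∫ u, (a₃ u) ^ 5 ∂μ) = 0 ∧
    (∫ u, (a₃ u) ^ 6 ∂μ) = 1109120 := by
  intro M α₁ α₂ α₃ a₃
  have hint : ∀ n : ℕ, ∫ u, (a₃ u) ^ n ∂μ = ((Nn n : ℕ) : ℝ) :=
    fun n => integral_pow_real μ n
  have combined : ∀ n : ℕ,
      (∑ a ∈ Finset.range (n+1), ∑ b ∈ Finset.range (n+1), ∑ c ∈ Finset.range (n+1),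
          ∑ d ∈ Finset.range (n+1),
          if a + b + c + d = n then
            (n.factorial : ℝ)
                / ((a.factorial : ℝ) * b.factorial * c.factorial * d.factorial)
              * 2 ^ (a+b+c) * Mr (a+d) * Mr (b+d) * Mr (c+d)
          else 0)
        = ((Nn n : ℕ) : ℝ) := fun n => by rw [rhs_eq n, tri_cast n]
  refine ⟨fun n => ?_, ?_, ?_, ?_, ?_, ?_, ?_, ?_⟩
  · rw [hint n, ← combined n]; rfl
  · rw [hint 0, show Nn 0 = 1 from by decide +kernel]; norm_num
  · rw [hint 1, show Nn 1 = 0 from by decide +kernel]; norm_num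
  · rw [hint 2, show Nn 2 = 32 from by decide +kernel]; norm_num
  · rw [hint 3, show Nn 3 = 0 from by decide +kernel]; norm_num
  · rw [hint 4, show Nn 4 = 4920 from by decide +kernel]; norm_num
  · rw [hint 5, show Nn 5 = 0 from by decide +kernel]; norm_num
  · rw [hint 6, show Nn 6 = 1109120 from by decide +kernel]; norm_num
end
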